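/- arXiv:1005.5090 — 6 statements merged into one kernel-verified Lean document; each statement's English description precedes it below -/
import Mathlib

section
/- Let n ≥ 2 and let Q ⊆ ℝⁿ be a real quadric surface. Then the complement ℝⁿ \ Q has at most four connected components. -/
open Set Metric RealInnerProductSpace

noncomputable section

/-- Euclidean n-space. -/
abbrev En (n : ℕ) := EuclideanSpace ℝ (Fin n)

/-- A quadric surface in ℝⁿ: the zero set of a quadratic polynomial whose quadratic
part (given by a symmetric matrix) is not identically zero. -/
def IsQuadricSurface {n : ℕ} (Q : Set (En n)) : Prop :=
  ∃ (a : Matrix (Fin n) (Fin n) ℝ) (b : Fin n → ℝ) (c : ℝ),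
    a.IsSymm ∧ a ≠ 0 ∧
    Q = {x : En n | (∑ i, ∑ k, a i k * x i * x k) + 2 * (∑ i, b i * x i) + c = 0}

/-- A real quadric surface: a nonempty quadric surface. -/
def IsRealQuadricSurface {n : ℕ} (Q : Set (En n)) : Prop :=
  IsQuadricSurface Q ∧ Q.Nonempty

/-- The set of connected components of a subset `F` of a topological space. -/
def componentsIn {α : Type*} [TopologicalSpace α] (F : Set α) : Set (Set α) :=
  {C | ∃ x ∈ F, C = connectedComponentIn F x}

/-- A convex quadric: the frontier of a convex connected component of the complement
of a real quadric surface. -/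
def IsConvexQuadric {n : ℕ} (S : Set (En n)) : Prop :=
  ∃ Q U : Set (En n), IsRealQuadricSurface Q ∧ U ∈ componentsIn Qᶜ ∧
    Convex ℝ U ∧ S = frontier U

namespace QuadricAux

open Matrix

variable {n : ℕ}

/-- The quadratic polynomial. -/
def ppf (a : Matrix (Fin n) (Fin n) ℝ) (b : Fin n → ℝ) (c : ℝ) (x : Fin n → ℝ) : ℝ :=
  x ⬝ᵥ a *ᵥ x + 2 * (b ⬝ᵥ x) + c

/-- The quadratic form. -/
def quadf (a : Matrix (Fin n) (Fin n) ℝ) (v : Fin n → ℝ) : ℝ := v ⬝ᵥ a *ᵥ v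

/-- The (symmetrized, unnormalized) associated bilinear form. -/
def bilf (a : Matrix (Fin n) (Fin n) ℝ) (u v : Fin n → ℝ) : ℝ := u ⬝ᵥ a *ᵥ v + v ⬝ᵥ a *ᵥ u

/-- The linear form. -/
def linf (b v : Fin n → ℝ) : ℝ := b ⬝ᵥ v

lemma ppf_eq (a : Matrix (Fin n) (Fin n) ℝ) (b : Fin n → ℝ) (c : ℝ) (x : Fin n → ℝ) :
    ppf a b c x = (∑ i, ∑ k, a i k * x i * x k) + 2 * (∑ i, b i * x i) + c := by
  simp only [ppf, dotProduct, Matrix.mulVec, Finset.mul_sum]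
  congr 2
  exact Finset.sum_congr rfl fun i _ => Finset.sum_congr rfl fun k _ => by ring

variable (a : Matrix (Fin n) (Fin n) ℝ) (b : Fin n → ℝ) (c : ℝ)

lemma bilf_comm (u v : Fin n → ℝ) : bilf a u v = bilf a v u := add_comm _ _

private lemma expand1' (x v : Fin n → ℝ) (t : ℝ) :
    ppf a b c (x + t • v) =
      ppf a b c x + t * (bilf a x v + 2 * linf b v) + t ^ 2 * quadf a v := by
  simp only [ppf, quadf, bilf, linf, dotProduct_add, add_dotProduct, Matrix.mulVec_add,
    Matrix.mulVec_smul, dotProduct_smul, smul_dotProduct, smul_eq_mul]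
  ring

private lemma quadf_expand' (x v : Fin n → ℝ) (t : ℝ) :
    quadf a (x + t • v) = quadf a x + t * bilf a x v + t ^ 2 * quadf a v := by
  simp only [quadf, bilf, dotProduct_add, add_dotProduct, Matrix.mulVec_add,
    Matrix.mulVec_smul, dotProduct_smul, smul_dotProduct, smul_eq_mul]
  ring

private lemma expand2' (x v w : Fin n → ℝ) (α β : ℝ) :
    ppf a b c (x + α • v + β • w) =
      ppf a b c x + α * (bilf a x v + 2 * linf b v) + β * (bilf a x w + 2 * linf b w)
        + α * β * bilf a v w + α ^ 2 * quadf a v + β ^ 2 * quadf a w := by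
  simp only [ppf, quadf, bilf, linf, dotProduct_add, add_dotProduct, Matrix.mulVec_add,
    Matrix.mulVec_smul, dotProduct_smul, smul_dotProduct, smul_eq_mul]
  ring

lemma ppf_neg (x : Fin n → ℝ) : ppf (-a) (-b) (-c) x = - ppf a b c x := by
  simp only [ppf, Matrix.neg_mulVec, dotProduct_neg, neg_dotProduct]
  ring

/-- Euclidean-space versions (definitional transfers). -/
lemma expand1E (x v : Fin n → ℝ) (t : ℝ) :
    ppf a b c (x + t • v) =
      ppf a b c x + t * (bilf a x v + 2 * linf b v) + t ^ 2 * quadf a v :=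
  expand1' a b c x v t

lemma quadf_expandE (x v : Fin n → ℝ) (t : ℝ) :
    quadf a (x + t • v) = quadf a x + t * bilf a x v + t ^ 2 * quadf a v :=
  quadf_expand' a x v t

lemma expand2E (x v w : Fin n → ℝ) (α β : ℝ) :
    ppf a b c (x + α • v + β • w) =
      ppf a b c x + α * (bilf a x v + 2 * linf b v) + β * (bilf a x w + 2 * linf b w)
        + α * β * bilf a v w + α ^ 2 * quadf a v + β ^ 2 * quadf a w :=
  expand2' a b c x v w α β

lemma continuous_ppf : Continuous fun x : En n => ppf a b c x := by
  have h : (fun x : En n => ppf a b c x) =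
      fun x : En n => (∑ i, ∑ k, a i k * x i * x k) + 2 * (∑ i, b i * x i) + c :=
    funext fun x => ppf_eq a b c x
  rw [h]
  fun_prop

/-- Points along a positive segment lie in the same connected component. -/
lemma mem_comp_of_seg (x : En n) (v : En n) (s t : ℝ) (hst : s ≤ t)
    (hall : ∀ r ∈ Icc s t, 0 < ppf a b c (x + r • v)) :
    x + t • v ∈ connectedComponentIn {y : En n | 0 < ppf a b c y} (x + s • v) := by
  have hcont : Continuous fun r : ℝ => x + r • v := by fun_prop
  have hK : IsPreconnected ((fun r : ℝ => x + r • v) '' Icc s t) :=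
    isPreconnected_Icc.image _ hcont.continuousOn
  have hKS : ((fun r : ℝ => x + r • v) '' Icc s t) ⊆ {y : En n | 0 < ppf a b c y} := by
    rintro - ⟨r, hr, rfl⟩
    exact hall r hr
  have hsK : x + s • v ∈ ((fun r : ℝ => x + r • v) '' Icc s t) :=
    ⟨s, ⟨le_refl s, hst⟩, rfl⟩
  exact hK.subset_connectedComponentIn hsK hKS ⟨t, ⟨hst, le_refl t⟩, rfl⟩

lemma comp_eq_of_seg (x y : En n)
    (hall : ∀ r ∈ Icc (0:ℝ) 1, 0 < ppf a b c (x + r • (y - x))) :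
    connectedComponentIn {z : En n | 0 < ppf a b c z} x
      = connectedComponentIn {z : En n | 0 < ppf a b c z} y := by
  have h := mem_comp_of_seg a b c x (y - x) 0 1 zero_le_one hall
  have e0 : x + (0:ℝ) • (y - x) = x := by module
  have e1 : x + (1:ℝ) • (y - x) = y := by module
  rw [e0, e1] at h
  exact connectedComponentIn_eq h

private lemma real_concave_pos (Q L P0 t : ℝ) (hQ : Q ≤ 0) (hx : 0 < P0)
    (h1 : 0 < P0 + L + Q) (h0 : 0 ≤ t) (h1t : t ≤ 1) : 0 < P0 + t * L + t ^ 2 * Q := by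
  rcases le_total P0 (P0 + L + Q) with hm | hm
  · nlinarith [mul_nonneg (mul_nonneg h0 (sub_nonneg.2 h1t)) (neg_nonneg.2 hQ),
      mul_nonneg h0 (sub_nonneg.2 hm)]
  · nlinarith [mul_nonneg (mul_nonneg h0 (sub_nonneg.2 h1t)) (neg_nonneg.2 hQ),
      mul_nonneg (sub_nonneg.2 h1t) (sub_nonneg.2 hm)]

/-- Concavity: if the quadratic form is nonpositive on the direction, positive endpoints
give a positive segment, hence equal components. -/
lemma seg_comp_eq (x y : En n) (hx : 0 < ppf a b c x) (hy : 0 < ppf a b c y)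
    (hq : quadf a (y - x) ≤ 0) :
    connectedComponentIn {z : En n | 0 < ppf a b c z} x
      = connectedComponentIn {z : En n | 0 < ppf a b c z} y := by
  have e1 : x + (1:ℝ) • (y - x) = y := by module
  have h2 := expand1E a b c x (y - x) 1
  rw [one_smul, add_sub_cancel] at h2
  refine comp_eq_of_seg a b c x y fun r hr => ?_
  rw [expand1E a b c x (y - x) r]
  exact real_concave_pos _ _ _ r hq hx (by nlinarith [h2]) hr.1 hr.2
private lemma real_quad_pos_right (Q L P0 t0 t : ℝ) (hQ : 0 < Q) (h00 : 0 ≤ t0) (h01 : t0 ≤ 1)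
    (ht0 : P0 + t0 * L + t0 ^ 2 * Q ≤ 0) (hx : 0 < P0) (h1 : 0 < P0 + L + Q) (ht : 1 ≤ t) :
    0 < P0 + t * L + t ^ 2 * Q := by
  have hlt : t0 < 1 := lt_of_le_of_ne h01 (by rintro rfl; nlinarith)
  nlinarith [mul_pos (show (0:ℝ) < t - t0 by linarith) h1,
    mul_nonneg (show (0:ℝ) ≤ t - 1 by linarith)
      (show (0:ℝ) ≤ -(P0 + t0 * L + t0 ^ 2 * Q) by linarith),
    mul_nonneg (mul_nonneg (mul_nonneg hQ.le (show (0:ℝ) ≤ 1 - t0 by linarith))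
      (show (0:ℝ) ≤ t - 1 by linarith)) (show (0:ℝ) ≤ t - t0 by linarith),
    sub_pos.2 hlt]

private lemma real_quad_pos_left (Q L P0 t0 t : ℝ) (hQ : 0 < Q) (h00 : 0 ≤ t0) (h01 : t0 ≤ 1)
    (ht0 : P0 + t0 * L + t0 ^ 2 * Q ≤ 0) (hx : 0 < P0) (h1 : 0 < P0 + L + Q) (ht : t ≤ 0) :
    0 < P0 + t * L + t ^ 2 * Q := by
  have hlt : 0 < t0 := lt_of_le_of_ne h00 (by rintro rfl; nlinarith)
  nlinarith [mul_pos (show (0:ℝ) < t0 - t by linarith) hx,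
    mul_nonneg (show (0:ℝ) ≤ -t by linarith)
      (show (0:ℝ) ≤ -(P0 + t0 * L + t0 ^ 2 * Q) by linarith),
    mul_nonneg (mul_nonneg (mul_nonneg hQ.le (show (0:ℝ) ≤ -t by linarith)) hlt.le)
      (show (0:ℝ) ≤ t0 - t by linarith), hlt]

/-- Key dichotomy: if `x` and `y` are positive points in different components, then the
quadratic form is positive in the direction `y - x`, and the two rays escaping the segment
stay positive and in the respective components. -/
lemma ray_stuff (x y : En n) (hx : 0 < ppf a b c x) (hy : 0 < ppf a b c y)
    (hne : connectedComponentIn {z : En n | 0 < ppf a b c z} x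
      ≠ connectedComponentIn {z : En n | 0 < ppf a b c z} y) :
    0 < quadf a (y - x) ∧
      (∀ t : ℝ, 1 ≤ t → 0 < ppf a b c (x + t • (y - x)) ∧
        x + t • (y - x) ∈ connectedComponentIn {z : En n | 0 < ppf a b c z} y) ∧
      (∀ t : ℝ, t ≤ 0 → 0 < ppf a b c (x + t • (y - x)) ∧
        x + t • (y - x) ∈ connectedComponentIn {z : En n | 0 < ppf a b c z} x) := by
  have e0 : x + (0:ℝ) • (y - x) = x := by module
  have e1 : x + (1:ℝ) • (y - x) = y := by module
  have h2 := expand1E a b c x (y - x) 1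
  rw [one_smul, add_sub_cancel] at h2
  have hQ : 0 < quadf a (y - x) := by
    rcases lt_or_ge 0 (quadf a (y - x)) with h | h
    · exact h
    · exact absurd (seg_comp_eq a b c x y hx hy h) hne
  have hex : ∃ t0, t0 ∈ Icc (0:ℝ) 1 ∧ ppf a b c (x + t0 • (y - x)) ≤ 0 := by
    by_contra hcon
    push_neg at hcon
    exact hne (comp_eq_of_seg a b c x y fun r hr => hcon r hr)
  obtain ⟨t0, ht0, hq0⟩ := hex
  rw [expand1E a b c x (y - x) t0] at hq0
  have h1' : 0 < ppf a b c x + (bilf a x (y - x) + 2 * linf b (y - x)) + quadf a (y - x) := by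
    nlinarith [h2]
  refine ⟨hQ, fun t ht => ?_, fun t ht => ?_⟩
  · have hpos : ∀ r ∈ Icc (1:ℝ) t, 0 < ppf a b c (x + r • (y - x)) := by
      intro r hr
      rw [expand1E a b c x (y - x) r]
      exact real_quad_pos_right _ _ _ t0 r hQ ht0.1 ht0.2 hq0 hx h1' hr.1
    have hmem := mem_comp_of_seg a b c x (y - x) 1 t ht hpos
    rw [e1] at hmem
    exact ⟨hpos t ⟨ht, le_refl t⟩, hmem⟩
  · have hpos : ∀ r ∈ Icc t 0, 0 < ppf a b c (x + r • (y - x)) := by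
      intro r hr
      rw [expand1E a b c x (y - x) r]
      exact real_quad_pos_left _ _ _ t0 r hQ ht0.1 ht0.2 hq0 hx h1' hr.2
    have hmem := mem_comp_of_seg a b c x (y - x) t 0 ht hpos
    rw [e0] at hmem
    have hxt : 0 < ppf a b c (x + t • (y - x)) := hpos t ⟨le_refl t, ht⟩
    refine ⟨hxt, ?_⟩
    rw [← connectedComponentIn_eq hmem]
    exact mem_connectedComponentIn hxt

private lemma rank_E2 : (1 : Cardinal) < Module.rank ℝ (EuclideanSpace ℝ (Fin 2)) := by
  rw [← Module.finrank_eq_rank]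
  norm_num

private lemma norm_sq_E2 (z : EuclideanSpace ℝ (Fin 2)) : ‖z‖ ^ 2 = (z 0) ^ 2 + (z 1) ^ 2 := by
  rw [EuclideanSpace.norm_eq, Real.sq_sqrt (by positivity)]
  simp [Fin.sum_univ_two, Real.norm_eq_abs, sq_abs]

/-- The set of positivity of a quadratic function on the plane whose quadratic part is
positive definite is preconnected. -/
private lemma plane_preconnected (Q1 Q2 B g0 : ℝ) (hQ1 : 0 < Q1) (hQ2 : 0 < Q2)
    (hD : B ^ 2 < 4 * Q1 * Q2) :
    IsPreconnected {z : EuclideanSpace ℝ (Fin 2) |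
      0 < g0 + Q1 * (z 0) ^ 2 + B * (z 0) * (z 1) + Q2 * (z 1) ^ 2} := by
  set S₂ : Set (EuclideanSpace ℝ (Fin 2)) :=
    {z | 0 < g0 + Q1 * (z 0) ^ 2 + B * (z 0) * (z 1) + Q2 * (z 1) ^ 2} with hS₂
  have hquad_nonneg : ∀ y0 y1 : ℝ, 0 ≤ Q1 * y0 ^ 2 + B * y0 * y1 + Q2 * y1 ^ 2 := by
    intro y0 y1
    nlinarith [sq_nonneg (2 * Q1 * y0 + B * y1), sq_nonneg y1, hQ1]
  have hlow : ∀ y0 y1 : ℝ, (4 * Q1 * Q2 - B ^ 2) * (y0 ^ 2 + y1 ^ 2)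
      ≤ 4 * (Q1 + Q2) * (Q1 * y0 ^ 2 + B * y0 * y1 + Q2 * y1 ^ 2) := by
    intro y0 y1
    nlinarith [sq_nonneg (2 * Q1 * y0 + B * y1), sq_nonneg (B * y0 + 2 * Q2 * y1)]
  by_cases hg0 : 0 < g0
  · have : S₂ = univ := eq_univ_of_forall fun z => by
      have := hquad_nonneg (z 0) (z 1)
      simp only [hS₂, mem_setOf_eq]
      nlinarith
    rw [this]
    exact isPreconnected_univ
  push_neg at hg0
  set D := 4 * Q1 * Q2 - B ^ 2 with hDdef
  have hDpos : 0 < D := by simp only [hDdef]; nlinarith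
  set T := Q1 + Q2 with hTdef
  have hT : 0 < T := by positivity
  set R := Real.sqrt (4 * T * (1 - g0) / D) with hRdef
  have hRarg : 0 < 4 * T * (1 - g0) / D := by
    apply div_pos _ hDpos
    nlinarith
  have hR : 0 < R := Real.sqrt_pos.2 hRarg
  have hR2 : D * R ^ 2 = 4 * T * (1 - g0) := by
    rw [hRdef, Real.sq_sqrt hRarg.le]
    field_simp
  set F : Set (EuclideanSpace ℝ (Fin 2)) := {z | R < ‖z‖} with hFdef
  have hFS : F ⊆ S₂ := by
    intro z hz
    have hz' : R < ‖z‖ := hz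
    have hz2 : R ^ 2 < (z 0) ^ 2 + (z 1) ^ 2 := by
      rw [← norm_sq_E2 z]
      exact pow_lt_pow_left₀ hz' hR.le (by norm_num)
    have h1 := hlow (z 0) (z 1)
    simp only [hS₂, mem_setOf_eq]
    nlinarith [mul_lt_mul_of_pos_left hz2 hDpos]
  have hFpre : IsPreconnected F := by
    have himg : F = (fun p : EuclideanSpace ℝ (Fin 2) × ℝ => p.2 • p.1) ''
        ((sphere (0 : EuclideanSpace ℝ (Fin 2)) 1) ×ˢ (Ioi R)) := by
      ext z
      constructor
      · intro hz
        have hz' : R < ‖z‖ := hz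
        have hzn : ‖z‖ ≠ 0 := (lt_trans hR hz').ne'
        refine ⟨(‖z‖⁻¹ • z, ‖z‖), ⟨?_, hz'⟩, ?_⟩
        · simp [norm_smul, abs_of_nonneg (norm_nonneg z), inv_mul_cancel₀ hzn]
        · simp [smul_smul, mul_inv_cancel₀ hzn]
      · rintro ⟨⟨w, t⟩, ⟨hw, ht⟩, rfl⟩
        have hw1 : ‖w‖ = 1 := by simpa using hw
        have ht' : R < t := ht
        show R < ‖t • w‖
        rw [norm_smul, hw1, mul_one, Real.norm_eq_abs, abs_of_pos (lt_trans hR ht')]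
        exact ht'
    rw [himg]
    refine IsPreconnected.image ?_ _ ?_
    · exact ((isConnected_sphere rank_E2 0 zero_le_one).isPreconnected).prod isPreconnected_Ioi
    · exact (continuous_snd.smul continuous_fst).continuousOn
  -- base point in F
  set z0 : EuclideanSpace ℝ (Fin 2) := EuclideanSpace.single (0 : Fin 2) (R + 1) with hz0def
  have hz0F : z0 ∈ F := by
    show R < ‖z0‖
    rw [hz0def, EuclideanSpace.norm_single]
    rw [Real.norm_eq_abs, abs_of_pos (by linarith)]
    linarith
  have main : S₂ ⊆ connectedComponentIn S₂ z0 := by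
    intro z hz
    have hzpos : 0 < g0 + Q1 * (z 0) ^ 2 + B * (z 0) * (z 1) + Q2 * (z 1) ^ 2 := hz
    have hqz : 0 < Q1 * (z 0) ^ 2 + B * (z 0) * (z 1) + Q2 * (z 1) ^ 2 := by linarith
    have hzne : ‖z‖ ≠ 0 := by
      intro h
      have : z = 0 := by simpa using (norm_eq_zero.1 h)
      rw [this] at hqz
      have h00 : ((0 : EuclideanSpace ℝ (Fin 2)) 0) = (0:ℝ) := rfl
      have h01 : ((0 : EuclideanSpace ℝ (Fin 2)) 1) = (0:ℝ) := rfl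
      rw [h00, h01] at hqz
      nlinarith
    have hznorm : 0 < ‖z‖ := lt_of_le_of_ne (norm_nonneg z) (Ne.symm hzne)
    set ray : Set (EuclideanSpace ℝ (Fin 2)) := (fun t : ℝ => t • z) '' Ici 1 with hraydef
    have hraysub : ray ⊆ S₂ := by
      rintro - ⟨t, ht, rfl⟩
      have hco : ∀ i, (t • z) i = t * z i := fun _ => rfl
      show 0 < g0 + Q1 * ((t • z) 0) ^ 2 + B * ((t • z) 0) * ((t • z) 1) + Q2 * ((t • z) 1) ^ 2
      rw [hco 0, hco 1]
      have h1t : (1:ℝ) ≤ t := ht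
      nlinarith [mul_nonneg (mul_nonneg (sub_nonneg.2 h1t) (show (0:ℝ) ≤ t + 1 by linarith)) hqz.le, hzpos]
    have hraypre : IsPreconnected ray :=
      isPreconnected_Ici.image _ (continuous_id.smul continuous_const).continuousOn
    set t1 := max 1 ((R + 1) / ‖z‖) with ht1def
    have ht1mem : t1 • z ∈ ray := ⟨t1, mem_Ici.2 (le_max_left _ _), rfl⟩
    have ht1F : t1 • z ∈ F := by
      show R < ‖t1 • z‖
      rw [norm_smul, Real.norm_eq_abs]
      have h1t : (1:ℝ) ≤ t1 := le_max_left _ _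
      have h2t : (R + 1) / ‖z‖ ≤ t1 := le_max_right _ _
      have : R + 1 ≤ t1 * ‖z‖ := by
        rw [← div_le_iff₀ hznorm] at *
        exact h2t
      rw [abs_of_pos (by linarith)]
      linarith
    have hunion : IsPreconnected (ray ∪ F) :=
      IsPreconnected.union (t1 • z) ht1mem ht1F hraypre hFpre
    have hsub : ray ∪ F ⊆ S₂ := union_subset hraysub hFS
    have hzray : z ∈ ray := ⟨1, mem_Ici.2 (le_refl 1), one_smul ℝ z⟩
    exact hunion.subset_connectedComponentIn (Or.inr hz0F) hsub (Or.inl hzray)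
  have : S₂ = connectedComponentIn S₂ z0 :=
    Subset.antisymm main (connectedComponentIn_subset _ _)
  rw [this]
  exact isPreconnected_connectedComponentIn

private lemma case2_key (Q1 Q2 B α : ℝ) (hQ1 : 0 < Q1) (hQ2 : 0 < Q2) (hB : B ≤ 0)
    (hBB : 4 * Q1 * Q2 ≤ B ^ 2) (hα0 : 0 ≤ α) (hα2 : α ^ 2 * Q1 = Q2) :
    Q2 + α * B + α ^ 2 * Q1 ≤ 0 := by
  nlinarith [mul_le_mul_of_nonneg_left hBB (sq_nonneg α), mul_nonneg hα0 (neg_nonneg.2 hB),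
    sq_nonneg (α * B + 2 * Q2), hQ2.le, sq_nonneg α]

/-- The plane case: if the quadratic form restricted to the plane through `u1,u2,u3` is
positive definite, then `u1` and `u2` lie in the same component of the positivity set. -/
private lemma case3 (u1 u2 u3 : En n)
    (hp1 : 0 < ppf a b c u1) (hp2 : 0 < ppf a b c u2)
    (hQ1 : 0 < quadf a (u2 - u1)) (hQ2 : 0 < quadf a (u3 - u2))
    (hcase : (bilf a (u2 - u1) (u3 - u2)) ^ 2 < 4 * quadf a (u2 - u1) * quadf a (u3 - u2)) :
    connectedComponentIn {z : En n | 0 < ppf a b c z} u1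
      = connectedComponentIn {z : En n | 0 < ppf a b c z} u2 := by
  have hDpos : 0 < 4 * quadf a (u2 - u1) * quadf a (u3 - u2)
      - (bilf a (u2 - u1) (u3 - u2)) ^ 2 := by linarith
  obtain ⟨m1, m2, heq1, heq2⟩ : ∃ m1 m2 : ℝ,
      2 * quadf a (u2 - u1) * m1 + bilf a (u2 - u1) (u3 - u2) * m2
        + (bilf a u1 (u2 - u1) + 2 * linf b (u2 - u1)) = 0 ∧
      bilf a (u2 - u1) (u3 - u2) * m1 + 2 * quadf a (u3 - u2) * m2
        + (bilf a u1 (u3 - u2) + 2 * linf b (u3 - u2)) = 0 := by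
    refine ⟨(bilf a (u2 - u1) (u3 - u2) * (bilf a u1 (u3 - u2) + 2 * linf b (u3 - u2))
        - 2 * quadf a (u3 - u2) * (bilf a u1 (u2 - u1) + 2 * linf b (u2 - u1)))
          / (4 * quadf a (u2 - u1) * quadf a (u3 - u2) - (bilf a (u2 - u1) (u3 - u2)) ^ 2),
      (bilf a (u2 - u1) (u3 - u2) * (bilf a u1 (u2 - u1) + 2 * linf b (u2 - u1))
        - 2 * quadf a (u2 - u1) * (bilf a u1 (u3 - u2) + 2 * linf b (u3 - u2)))
          / (4 * quadf a (u2 - u1) * quadf a (u3 - u2) - (bilf a (u2 - u1) (u3 - u2)) ^ 2),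
      ?_, ?_⟩ <;>
    · rw [mul_div_assoc', mul_div_assoc', ← add_div, div_add' _ _ _ hDpos.ne',
        div_eq_zero_iff]
      left
      ring
  have hG : ∀ z : EuclideanSpace ℝ (Fin 2),
      ppf a b c (u1 + (m1 + z 0) • (u2 - u1) + (m2 + z 1) • (u3 - u2))
        = ppf a b c (u1 + m1 • (u2 - u1) + m2 • (u3 - u2))
          + quadf a (u2 - u1) * (z 0) ^ 2
          + bilf a (u2 - u1) (u3 - u2) * (z 0) * (z 1)
          + quadf a (u3 - u2) * (z 1) ^ 2 := by
    intro z
    rw [expand2E a b c u1 (u2 - u1) (u3 - u2) (m1 + z 0) (m2 + z 1),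
      expand2E a b c u1 (u2 - u1) (u3 - u2) m1 m2]
    linear_combination (z 0) * heq1 + (z 1) * heq2
  have hpre := plane_preconnected (quadf a (u2 - u1)) (quadf a (u3 - u2))
    (bilf a (u2 - u1) (u3 - u2)) (ppf a b c (u1 + m1 • (u2 - u1) + m2 • (u3 - u2)))
    hQ1 hQ2 hcase
  set ψ : EuclideanSpace ℝ (Fin 2) → En n :=
    fun z => u1 + (m1 + z 0) • (u2 - u1) + (m2 + z 1) • (u3 - u2) with hψdef
  have hψcont : Continuous ψ := by
    rw [hψdef]
    fun_prop
  set S₂ : Set (EuclideanSpace ℝ (Fin 2)) :=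
    {z | 0 < ppf a b c (u1 + m1 • (u2 - u1) + m2 • (u3 - u2))
      + quadf a (u2 - u1) * (z 0) ^ 2
      + bilf a (u2 - u1) (u3 - u2) * (z 0) * (z 1)
      + quadf a (u3 - u2) * (z 1) ^ 2} with hS₂def
  have hTpre : IsPreconnected (ψ '' S₂) := hpre.image ψ hψcont.continuousOn
  have hTS : ψ '' S₂ ⊆ {z : En n | 0 < ppf a b c z} := by
    rintro - ⟨z, hz, rfl⟩
    exact lt_of_lt_of_eq hz (hG z).symm
  set za : EuclideanSpace ℝ (Fin 2) := !₂[-m1, -m2] with hzadef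
  set zb : EuclideanSpace ℝ (Fin 2) := !₂[1 - m1, -m2] with hzbdef
  have hza0 : za 0 = -m1 := rfl
  have hza1 : za 1 = -m2 := rfl
  have hzb0 : zb 0 = 1 - m1 := rfl
  have hzb1 : zb 1 = -m2 := rfl
  have hψa : ψ za = u1 := by
    show u1 + (m1 + za 0) • (u2 - u1) + (m2 + za 1) • (u3 - u2) = u1
    rw [hza0, hza1]
    module
  have hψb : ψ zb = u2 := by
    show u1 + (m1 + zb 0) • (u2 - u1) + (m2 + zb 1) • (u3 - u2) = u2
    rw [hzb0, hzb1]
    module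
  have hzaS : za ∈ S₂ := by
    show 0 < ppf a b c (u1 + m1 • (u2 - u1) + m2 • (u3 - u2))
      + quadf a (u2 - u1) * (za 0) ^ 2
      + bilf a (u2 - u1) (u3 - u2) * (za 0) * (za 1)
      + quadf a (u3 - u2) * (za 1) ^ 2
    rw [← hG za]
    show 0 < ppf a b c (ψ za)
    rw [hψa]
    exact hp1
  have hzbS : zb ∈ S₂ := by
    show 0 < ppf a b c (u1 + m1 • (u2 - u1) + m2 • (u3 - u2))
      + quadf a (u2 - u1) * (zb 0) ^ 2
      + bilf a (u2 - u1) (u3 - u2) * (zb 0) * (zb 1)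
      + quadf a (u3 - u2) * (zb 1) ^ 2
    rw [← hG zb]
    show 0 < ppf a b c (ψ zb)
    rw [hψb]
    exact hp2
  have hsub := hTpre.subset_connectedComponentIn (mem_image_of_mem ψ hzaS) hTS
  rw [hψa] at hsub
  have hu2 : u2 ∈ connectedComponentIn {z : En n | 0 < ppf a b c z} u1 := by
    have := hsub (mem_image_of_mem ψ hzbS)
    rwa [hψb] at this
  exact connectedComponentIn_eq hu2

/-- The positivity set of a quadratic polynomial has at most two connected components. -/
lemma not_three (u1 u2 u3 : En n)
    (hp1 : 0 < ppf a b c u1) (hp2 : 0 < ppf a b c u2) (hp3 : 0 < ppf a b c u3)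
    (h12 : connectedComponentIn {z : En n | 0 < ppf a b c z} u1
      ≠ connectedComponentIn {z : En n | 0 < ppf a b c z} u2)
    (h13 : connectedComponentIn {z : En n | 0 < ppf a b c z} u1
      ≠ connectedComponentIn {z : En n | 0 < ppf a b c z} u3)
    (h23 : connectedComponentIn {z : En n | 0 < ppf a b c z} u2
      ≠ connectedComponentIn {z : En n | 0 < ppf a b c z} u3) : False := by
  obtain ⟨hQ1, hray12, hray12'⟩ := ray_stuff a b c u1 u2 hp1 hp2 h12
  obtain ⟨hQ2, hray23, hray23'⟩ := ray_stuff a b c u2 u3 hp2 hp3 h23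
  rcases lt_or_ge ((bilf a (u2 - u1) (u3 - u2)) ^ 2)
      (4 * quadf a (u2 - u1) * quadf a (u3 - u2)) with hcase | hcase
  · exact h12 (case3 a b c u1 u2 u3 hp1 hp2 hQ1 hQ2 hcase)
  rcases le_or_gt (bilf a (u2 - u1) (u3 - u2)) 0 with hB | hB
  · -- Case 2 : B ≤ 0 and B² ≥ 4 Q1 Q2
    rcases le_total (quadf a (u2 - u1)) (quadf a (u3 - u2)) with hQQ | hQQ
    · -- use the backwards ray from u1
      set α := Real.sqrt (quadf a (u3 - u2) / quadf a (u2 - u1)) with hαdef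
      have hα0 : 0 ≤ α := Real.sqrt_nonneg _
      have hα2 : α ^ 2 * quadf a (u2 - u1) = quadf a (u3 - u2) := by
        rw [hαdef, Real.sq_sqrt (div_nonneg hQ2.le hQ1.le)]
        field_simp
      have hα1 : 1 ≤ α := by
        by_contra hcon
        push_neg at hcon
        have h1 : α ^ 2 < 1 := by nlinarith [mul_nonneg hα0 hα0]
        nlinarith [mul_lt_mul_of_pos_right h1 hQ1]
      obtain ⟨hxpos, hxmem⟩ := hray12' (1 - α) (by linarith)
      have hvec : (u3 - (u1 + (1 - α) • (u2 - u1)) : Fin n → ℝ) = (u3 - u2) + α • (u2 - u1) := by module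
      have hqv : quadf a (u3 - (u1 + (1 - α) • (u2 - u1))) ≤ 0 := by
        rw [hvec, quadf_expandE a (u3 - u2) (u2 - u1) α, bilf_comm a (u3 - u2) (u2 - u1)]
        exact case2_key _ _ _ α hQ1 hQ2 hB hcase hα0 hα2
      have hcomp := seg_comp_eq a b c (u1 + (1 - α) • (u2 - u1)) u3 hxpos hp3 hqv
      exact h13 ((connectedComponentIn_eq hxmem).trans hcomp)
    · -- use the forward ray from u3
      set β := Real.sqrt (quadf a (u2 - u1) / quadf a (u3 - u2)) with hβdef
      have hβ0 : 0 ≤ β := Real.sqrt_nonneg _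
      have hβ2 : β ^ 2 * quadf a (u3 - u2) = quadf a (u2 - u1) := by
        rw [hβdef, Real.sq_sqrt (div_nonneg hQ1.le hQ2.le)]
        field_simp
      have hβ1 : 1 ≤ β := by
        by_contra hcon
        push_neg at hcon
        have h1 : β ^ 2 < 1 := by nlinarith [mul_nonneg hβ0 hβ0]
        nlinarith [mul_lt_mul_of_pos_right h1 hQ2]
      obtain ⟨hypos, hymem⟩ := hray23 β hβ1
      have hvec : ((u2 + β • (u3 - u2)) - u1 : Fin n → ℝ) = (u2 - u1) + β • (u3 - u2) := by module
      have hqv : quadf a ((u2 + β • (u3 - u2)) - u1) ≤ 0 := by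
        rw [hvec, quadf_expandE a (u2 - u1) (u3 - u2) β]
        have := case2_key (quadf a (u3 - u2)) (quadf a (u2 - u1))
          (bilf a (u2 - u1) (u3 - u2)) β hQ2 hQ1 hB (by linarith) hβ0 hβ2
        linarith
      have hcomp := seg_comp_eq a b c u1 (u2 + β • (u3 - u2)) hp1 hypos hqv
      exact h13 (hcomp.trans (connectedComponentIn_eq hymem).symm)
  · -- Case 1 : B > 0 and B² ≥ 4 Q1 Q2
    set r := bilf a (u2 - u1) (u3 - u2) / (2 * quadf a (u2 - u1)) with hrdef
    have hr : 0 < r := div_pos hB (by linarith)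
    have hr2 : 2 * quadf a (u2 - u1) * r = bilf a (u2 - u1) (u3 - u2) := by
      rw [hrdef]
      field_simp
    obtain ⟨hxpos, hxmem⟩ := hray12 (1 + r) (by linarith)
    have hvec : (u3 - (u1 + (1 + r) • (u2 - u1)) : Fin n → ℝ) = (u3 - u2) + (-r) • (u2 - u1) := by module
    have hqv : quadf a (u3 - (u1 + (1 + r) • (u2 - u1))) ≤ 0 := by
      rw [hvec, quadf_expandE a (u3 - u2) (u2 - u1) (-r), bilf_comm a (u3 - u2) (u2 - u1)]
      have key : 4 * quadf a (u2 - u1) * (quadf a (u3 - u2)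
          + (-r) * bilf a (u2 - u1) (u3 - u2) + (-r) ^ 2 * quadf a (u2 - u1))
          = 4 * quadf a (u2 - u1) * quadf a (u3 - u2)
            - (bilf a (u2 - u1) (u3 - u2)) ^ 2 := by
        linear_combination (2 * quadf a (u2 - u1) * r - bilf a (u2 - u1) (u3 - u2)) * hr2
      nlinarith [key, hcase, hQ1]
    have hcomp := seg_comp_eq a b c (u1 + (1 + r) • (u2 - u1)) u3 hxpos hp3 hqv
    exact h23 ((connectedComponentIn_eq hxmem).trans hcomp)

/-- A set whose points never realize three distinct components has at most two components. -/
lemma two_components (S : Set (En n))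
    (h : ∀ u1 u2 u3 : En n, u1 ∈ S → u2 ∈ S → u3 ∈ S →
      connectedComponentIn S u1 ≠ connectedComponentIn S u2 →
      connectedComponentIn S u1 ≠ connectedComponentIn S u3 →
      connectedComponentIn S u2 ≠ connectedComponentIn S u3 → False) :
    ∃ C1 C2 : Set (En n), componentsIn S ⊆ {C1, C2} := by
  by_cases h1 : (componentsIn S).Nonempty
  · obtain ⟨C1, x, hx, hC1⟩ := h1
    by_cases h2 : ∃ C ∈ componentsIn S, C ≠ C1
    · obtain ⟨C2, ⟨y, hy, hC2⟩, hne⟩ := h2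
      refine ⟨C1, C2, ?_⟩
      rintro C ⟨z, hz, rfl⟩
      by_contra hC
      simp only [mem_insert_iff, mem_singleton_iff] at hC
      push_neg at hC
      subst hC1
      subst hC2
      exact h z x y hz hx hy hC.1 hC.2 fun hh => hne hh.symm
    · push_neg at h2
      exact ⟨C1, C1, fun C hC => by rw [h2 C hC]; exact mem_insert _ _⟩
  · exact ⟨∅, ∅, fun C hC => absurd ⟨C, hC⟩ h1⟩

/-- In the nonvanishing set, the component of a positive point is its component in the
positivity set. -/
lemma comp_pos_eq (x : En n) (hx : 0 < ppf a b c x) :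
    connectedComponentIn {y : En n | ppf a b c y ≠ 0} x
      = connectedComponentIn {y : En n | 0 < ppf a b c y} x := by
  apply Subset.antisymm
  · have hApre : IsPreconnected (connectedComponentIn {y : En n | ppf a b c y ≠ 0} x) :=
      isPreconnected_connectedComponentIn
    have hAsub := connectedComponentIn_subset {y : En n | ppf a b c y ≠ 0} x
    have hAS : connectedComponentIn {y : En n | ppf a b c y ≠ 0} x
        ⊆ {y : En n | 0 < ppf a b c y} := by
      intro y hy
      rcases lt_trichotomy (ppf a b c y) 0 with hneg | hzero | hpos
      · exfalso
        have him : IsPreconnected ((fun w : En n => ppf a b c w) ''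
            connectedComponentIn {y : En n | ppf a b c y ≠ 0} x) :=
          hApre.image _ (continuous_ppf a b c).continuousOn
        have h0 : (0:ℝ) ∈ (fun w : En n => ppf a b c w) ''
            connectedComponentIn {y : En n | ppf a b c y ≠ 0} x :=
          him.ordConnected.out (mem_image_of_mem _ hy)
            (mem_image_of_mem _ (mem_connectedComponentIn
              (show x ∈ {y : En n | ppf a b c y ≠ 0} from ne_of_gt hx)))
            ⟨hneg.le, hx.le⟩
        obtain ⟨w, hw, hw0⟩ := h0
        exact hAsub hw hw0
      · exact absurd hzero (hAsub hy)
      · exact hpos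
    exact hApre.subset_connectedComponentIn
      (mem_connectedComponentIn (show x ∈ {y : En n | ppf a b c y ≠ 0} from ne_of_gt hx)) hAS
  · exact connectedComponentIn_mono x fun y hy => ne_of_gt hy

end QuadricAux


/-- the complement of a real quadric surface in ℝⁿ (n ≥ 2) has at most
four connected components. -/
theorem quadric_complement_at_most_four_components
    {n : ℕ} (hn : 2 ≤ n) (Q : Set (En n)) (hQ : IsRealQuadricSurface Q) :
    (componentsIn Qᶜ).Finite ∧ (componentsIn Qᶜ).ncard ≤ 4 := by
  classical
  open QuadricAux in
  obtain ⟨⟨a, b, c, _hsym, _hane, hQeq⟩, _hQne⟩ := hQ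
  have hQc : Qᶜ = {x : En n | ppf a b c x ≠ 0} := by
    rw [hQeq]
    ext x
    simp only [mem_compl_iff, mem_setOf_eq, Ne]
    rw [ppf_eq a b c x]
  have hsplit : componentsIn Qᶜ ⊆
      componentsIn {x : En n | 0 < ppf a b c x}
        ∪ componentsIn {x : En n | 0 < ppf (-a) (-b) (-c) x} := by
    rintro C ⟨x, hx, rfl⟩
    rw [hQc] at hx ⊢
    have hx' : ppf a b c x ≠ 0 := hx
    rcases lt_or_gt_of_ne hx' with hneg | hpos
    · right
      have hposneg : 0 < ppf (-a) (-b) (-c) x := by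
        rw [ppf_neg]
        linarith
      refine ⟨x, hposneg, ?_⟩
      have hne_eq : {y : En n | ppf a b c y ≠ 0} = {y : En n | ppf (-a) (-b) (-c) y ≠ 0} := by
        ext y
        simp [ppf_neg]
      rw [hne_eq]
      exact comp_pos_eq (-a) (-b) (-c) x hposneg
    · exact Or.inl ⟨x, hpos, comp_pos_eq a b c x hpos⟩
  obtain ⟨C1, C2, hC12⟩ := two_components {x : En n | 0 < ppf a b c x}
    fun u1 u2 u3 h1 h2 h3 h12 h13 h23 => not_three a b c u1 u2 u3 h1 h2 h3 h12 h13 h23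
  obtain ⟨C3, C4, hC34⟩ := two_components {x : En n | 0 < ppf (-a) (-b) (-c) x}
    fun u1 u2 u3 h1 h2 h3 h12 h13 h23 =>
      not_three (-a) (-b) (-c) u1 u2 u3 h1 h2 h3 h12 h13 h23
  have hsub : componentsIn Qᶜ ⊆ {C1, C2, C3, C4} := by
    intro C hC
    rcases hsplit hC with h | h
    · rcases hC12 h with h' | h'
      · exact Or.inl h'
      · exact Or.inr (Or.inl h')
    · rcases hC34 h with h' | h'
      · exact Or.inr (Or.inr (Or.inl h'))
      · exact Or.inr (Or.inr (Or.inr h'))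
  have hfin : ({C1, C2, C3, C4} : Set (Set (En n))).Finite :=
    (((Set.finite_singleton C4).insert C3).insert C2).insert C1
  refine ⟨hfin.subset hsub, ?_⟩
  have h4 : ({C1, C2, C3, C4} : Set (Set (En n))).ncard ≤ 4 := by
    have h3 : ({C2, C3, C4} : Set (Set (En n))).ncard ≤ 3 := by
      have h2 : ({C3, C4} : Set (Set (En n))).ncard ≤ 2 := by
        have := Set.ncard_insert_le C3 ({C4} : Set (Set (En n)))
        simpa [Set.ncard_singleton] using this
      have := Set.ncard_insert_le C2 ({C3, C4} : Set (Set (En n)))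
      omega
    have := Set.ncard_insert_le C1 ({C2, C3, C4} : Set (Set (En n)))
    omega
  exact le_trans (Set.ncard_le_ncard hsub hfin) h4
end
end

section
/- Let n ≥ 2 and 2 ≤ k ≤ n, and let Q = {x ∈ ℝⁿ : x₁² − x₂² − ⋯ − x_k² = 1}. Then ℝⁿ \ Q has exactly three connected components, namely U₊ = {x : x₁ > √(x₂² + ⋯ + x_k² + 1)}, U₋ = {x : x₁ < −√(x₂² + ⋯ + x_k² + 1)}, and W = {x : x₁² − x₂² − ⋯ − x_k² < 1}, and the components U₊ and U₋ are convex. -/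
open Set Metric

noncomputable section

namespace HypAux
variable {n k : ℕ}

def sq2 (k : ℕ) (x : En n) : ℝ :=
  ∑ i ∈ Finset.univ.filter (fun i : Fin n => 1 ≤ (i : ℕ) ∧ (i : ℕ) < k), x i ^ 2

lemma sq2_nonneg (x : En n) : 0 ≤ sq2 k x := Finset.sum_nonneg fun _ _ => sq_nonneg _

lemma continuous_coord (i : Fin n) : Continuous fun x : En n => x i :=
  (EuclideanSpace.proj i).continuous

lemma continuous_sq2 : Continuous (sq2 k : En n → ℝ) :=
  continuous_finset_sum _ fun i _ => (continuous_coord i).pow 2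

def UpS (k : ℕ) (h0 : 0 < n) : Set (En n) :=
  {x : En n | Real.sqrt (sq2 k x + 1) < x ⟨0, h0⟩}

def UmS (k : ℕ) (h0 : 0 < n) : Set (En n) :=
  {x : En n | x ⟨0, h0⟩ < -Real.sqrt (sq2 k x + 1)}

def WS (k : ℕ) (h0 : 0 < n) : Set (En n) :=
  {x : En n | x ⟨0, h0⟩ ^ 2 - sq2 k x < 1}

def QS (k : ℕ) (h0 : 0 < n) : Set (En n) :=
  {x : En n | x ⟨0, h0⟩ ^ 2 - sq2 k x = 1}

lemma open_up (h0 : 0 < n) : IsOpen (UpS k h0) :=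
  isOpen_lt ((continuous_sq2.add continuous_const).sqrt) (continuous_coord _)

lemma open_um (h0 : 0 < n) : IsOpen (UmS k h0) :=
  isOpen_lt (continuous_coord _) (((continuous_sq2.add continuous_const).sqrt).neg)

lemma open_w (h0 : 0 < n) : IsOpen (WS k h0) :=
  isOpen_lt (((continuous_coord _).pow 2).sub continuous_sq2) continuous_const

lemma compl_eq (h0 : 0 < n) : (QS k h0)ᶜ = UpS k h0 ∪ (UmS k h0 ∪ WS k h0) := by
  ext x
  have hs := sq2_nonneg (k := k) x
  have h1 : Real.sqrt (sq2 k x + 1) ^ 2 = sq2 k x + 1 := Real.sq_sqrt (by linarith)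
  have h2 : 0 ≤ Real.sqrt (sq2 k x + 1) := Real.sqrt_nonneg _
  simp only [QS, UpS, UmS, WS, mem_compl_iff, mem_setOf_eq, mem_union]
  constructor
  · intro hne
    by_cases hw : x ⟨0, h0⟩ ^ 2 - sq2 k x < 1
    · exact Or.inr (Or.inr hw)
    · have hgt : sq2 k x + 1 < x ⟨0, h0⟩ ^ 2 := by
        rcases lt_or_eq_of_le (not_lt.mp hw) with h | h
        · linarith
        · exact absurd h.symm hne
      have habs : Real.sqrt (sq2 k x + 1) < |x ⟨0, h0⟩| := by
        rw [← Real.sqrt_sq_eq_abs]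
        exact Real.sqrt_lt_sqrt (by linarith) hgt
      rcases le_or_gt 0 (x ⟨0, h0⟩) with h | h
      · rw [abs_of_nonneg h] at habs; exact Or.inl habs
      · rw [abs_of_neg h] at habs; exact Or.inr (Or.inl (by linarith))
  · rintro (h | h | h)
    · intro heq; nlinarith
    · intro heq; nlinarith
    · intro heq; linarith

lemma not_mem_pm (h0 : 0 < n) {x : En n} (h1 : x ∈ UpS k h0) (h2 : x ∈ UmS k h0) :
    False := by
  have hnn : 0 ≤ Real.sqrt (sq2 k x + 1) := Real.sqrt_nonneg _
  simp only [UpS, UmS, mem_setOf_eq] at h1 h2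
  linarith

lemma not_mem_pw (h0 : 0 < n) {x : En n} (h1 : x ∈ UpS k h0) (h2 : x ∈ WS k h0) :
    False := by
  have hs := sq2_nonneg (k := k) x
  have hsq : Real.sqrt (sq2 k x + 1) ^ 2 = sq2 k x + 1 := Real.sq_sqrt (by linarith)
  have hnn : 0 ≤ Real.sqrt (sq2 k x + 1) := Real.sqrt_nonneg _
  simp only [UpS, WS, mem_setOf_eq] at h1 h2
  nlinarith

lemma not_mem_mw (h0 : 0 < n) {x : En n} (h1 : x ∈ UmS k h0) (h2 : x ∈ WS k h0) :
    False := by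
  have hs := sq2_nonneg (k := k) x
  have hsq : Real.sqrt (sq2 k x + 1) ^ 2 = sq2 k x + 1 := Real.sq_sqrt (by linarith)
  have hnn : 0 ≤ Real.sqrt (sq2 k x + 1) := Real.sqrt_nonneg _
  simp only [UmS, WS, mem_setOf_eq] at h1 h2
  nlinarith

/-- witness points -/
def pt (h0 : 0 < n) (c : ℝ) : En n := WithLp.toLp 2 fun i => if i = ⟨0, h0⟩ then c else 0

lemma sq2_pt (h0 : 0 < n) (c : ℝ) : sq2 k (pt h0 c) = 0 := by
  unfold sq2
  refine Finset.sum_eq_zero fun i hi => ?_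
  simp only [Finset.mem_filter] at hi
  have : i ≠ ⟨0, h0⟩ := by
    intro h; rw [h] at hi; simp at hi
  simp [pt, this]

lemma pt_coord (h0 : 0 < n) (c : ℝ) : pt h0 c ⟨0, h0⟩ = c := by simp [pt]

lemma pt_mem_up (h0 : 0 < n) : pt h0 2 ∈ UpS k h0 := by
  norm_num [UpS, sq2_pt, pt_coord]

lemma pt_mem_um (h0 : 0 < n) : pt h0 (-2) ∈ UmS k h0 := by
  norm_num [UmS, sq2_pt, pt_coord]

lemma zero_mem_w (h0 : 0 < n) : (0 : En n) ∈ WS k h0 := by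
  have hs := sq2_nonneg (k := k) (0 : En n)
  simp only [WS, mem_setOf_eq]
  have : (0 : En n) ⟨0, h0⟩ = 0 := rfl
  rw [this]; linarith

lemma pt_not_mem_w (h0 : 0 < n) : pt h0 2 ∉ WS k h0 := by
  norm_num [WS, sq2_pt, pt_coord]

lemma ptm_not_mem_w (h0 : 0 < n) : pt h0 (-2) ∉ WS k h0 := by
  norm_num [WS, sq2_pt, pt_coord]

lemma pt_not_mem_um (h0 : 0 < n) : pt h0 2 ∉ UmS k h0 := by
  norm_num [UmS, sq2_pt, pt_coord]

def emb (k : ℕ) (x : En n) : En (n + 1) := WithLp.toLp 2 fun (j : Fin (n + 1)) =>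
  if h : (j : ℕ) < n then (if 1 ≤ (j : ℕ) ∧ (j : ℕ) < k then x ⟨j, h⟩ else 0) else 1

lemma norm_emb (x : En n) : ‖emb k x‖ = Real.sqrt (sq2 k x + 1) := by
  rw [EuclideanSpace.norm_eq]
  simp only [Real.norm_eq_abs, sq_abs]
  congr 1
  rw [Fin.sum_univ_castSucc]
  have h1 : emb k x (Fin.last n) = 1 := by simp [emb]
  have h2 : ∀ i : Fin n, emb k x i.castSucc =
      if 1 ≤ (i : ℕ) ∧ (i : ℕ) < k then x i else 0 := by
    intro i
    simp [emb, i.isLt]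
  simp only [h1, h2, sq2, Finset.sum_filter, one_pow]
  congr 1
  refine Finset.sum_congr rfl fun i _ => ?_
  split_ifs <;> simp

lemma emb_combo (x y : En n) {a b : ℝ} (hab : a + b = 1) :
    emb k (a • x + b • y) = a • emb k x + b • emb k y := by
  ext j
  simp only [emb, PiLp.add_apply, PiLp.smul_apply, smul_eq_mul, PiLp.toLp_apply]
  split_ifs <;> simp <;> linarith

lemma sqrt_combo_le (x y : En n) {a b : ℝ} (ha : 0 ≤ a) (hb : 0 ≤ b) (hab : a + b = 1) :
    Real.sqrt (sq2 k (a • x + b • y) + 1) ≤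
      a * Real.sqrt (sq2 k x + 1) + b * Real.sqrt (sq2 k y + 1) := by
  rw [← norm_emb, ← norm_emb, ← norm_emb, emb_combo x y hab]
  calc ‖a • emb k x + b • emb k y‖ ≤ ‖a • emb k x‖ + ‖b • emb k y‖ := norm_add_le _ _
    _ = a * ‖emb k x‖ + b * ‖emb k y‖ := by
        rw [norm_smul, norm_smul, Real.norm_eq_abs, Real.norm_eq_abs,
          abs_of_nonneg ha, abs_of_nonneg hb]

lemma coord_combo (x y : En n) (a b : ℝ) (i : Fin n) :
    (a • x + b • y) i = a * x i + b * y i := by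
  simp [PiLp.add_apply, PiLp.smul_apply]

lemma convex_up (h0 : 0 < n) : Convex ℝ (UpS k h0) := by
  intro x hx y hy a b ha hb hab
  simp only [UpS, mem_setOf_eq] at hx hy ⊢
  rw [coord_combo]
  refine lt_of_le_of_lt (sqrt_combo_le x y ha hb hab) ?_
  rcases eq_or_lt_of_le ha with h | h
  · have hb1 : (0 : ℝ) < b := by linarith
    have h2 := mul_lt_mul_of_pos_left hy hb1
    have h1 : a * Real.sqrt (sq2 k x + 1) ≤ a * x ⟨0, h0⟩ := by rw [← h]; simp
    linarith
  · have h1 := mul_lt_mul_of_pos_left hx h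
    have h2 := mul_le_mul_of_nonneg_left hy.le hb
    linarith

lemma convex_um (h0 : 0 < n) : Convex ℝ (UmS k h0) := by
  intro x hx y hy a b ha hb hab
  simp only [UmS, mem_setOf_eq] at hx hy ⊢
  rw [coord_combo]
  have key := sqrt_combo_le (k := k) x y ha hb hab
  rcases eq_or_lt_of_le ha with h | h
  · have hb1 : (0 : ℝ) < b := by linarith
    have h2 := mul_lt_mul_of_pos_left hy hb1
    have h1 : a * x ⟨0, h0⟩ ≤ a * (-Real.sqrt (sq2 k x + 1)) := by rw [← h]; simp
    nlinarith
  · have h1 := mul_lt_mul_of_pos_left hx h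
    have h2 := mul_le_mul_of_nonneg_left hy.le hb
    nlinarith

/-- projection killing the first coordinate -/
def pr (h0 : 0 < n) (x : En n) : En n := WithLp.toLp 2 fun i => if i = ⟨0, h0⟩ then 0 else x i

lemma seg1_sub (h0 : 0 < n) {x : En n} (hx : x ∈ WS k h0) :
    segment ℝ x (pr h0 x) ⊆ WS k h0 := by
  rintro z ⟨a, b, ha, hb, hab, rfl⟩
  simp only [WS, mem_setOf_eq] at hx ⊢
  have hco : ∀ i : Fin n, (a • x + b • pr h0 x) i = a * x i + b * pr h0 x i := by
    intro i; simp [PiLp.add_apply, PiLp.smul_apply]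
  have hc0 : (a • x + b • pr h0 x) ⟨0, h0⟩ = a * x ⟨0, h0⟩ := by
    rw [hco]; simp [pr]
  have hsq : sq2 k (a • x + b • pr h0 x) = sq2 k x := by
    unfold sq2
    refine Finset.sum_congr rfl fun i hi => ?_
    simp only [Finset.mem_filter] at hi
    have hne : i ≠ ⟨0, h0⟩ := by
      intro h; rw [h] at hi; simp at hi
    rw [hco]
    simp only [pr, if_neg hne]
    have : a * x i + b * x i = x i := by rw [← add_mul, hab, one_mul]
    rw [this]
  rw [hc0, hsq]
  have ha1 : a ≤ 1 := by linarith
  nlinarith [sq_nonneg (x ⟨0, h0⟩), mul_nonneg (mul_nonneg (sub_nonneg.2 ha1)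
    (by linarith : (0:ℝ) ≤ 1 + a)) (sq_nonneg (x ⟨0, h0⟩))]

lemma seg2_sub (h0 : 0 < n) {x : En n} :
    segment ℝ (pr h0 x) 0 ⊆ WS k h0 := by
  rintro z ⟨a, b, ha, hb, hab, rfl⟩
  simp only [WS, mem_setOf_eq]
  have hc0 : (a • pr h0 x + b • (0 : En n)) ⟨0, h0⟩ = 0 := by
    simp [PiLp.add_apply, PiLp.smul_apply, pr]
  have hs := sq2_nonneg (k := k) (a • pr h0 x + b • (0 : En n))
  rw [hc0]; nlinarith

lemma preconn_w (h0 : 0 < n) : IsPreconnected (WS k h0) := by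
  classical
  set T : En n → Set (En n) := fun x => segment ℝ x (pr h0 x) ∪ segment ℝ (pr h0 x) 0
    with hT
  have hzero : ∀ x : En n, (0 : En n) ∈ T x := fun x =>
    Or.inr (right_mem_segment ℝ (pr h0 x) (0 : En n))
  have hself : ∀ x : En n, x ∈ T x := fun x => Or.inl (left_mem_segment ℝ x (pr h0 x))
  have hpre : ∀ x : En n, IsPreconnected (T x) := by
    intro x
    refine IsPreconnected.union (pr h0 x) (right_mem_segment ℝ x (pr h0 x))
      (left_mem_segment ℝ (pr h0 x) (0 : En n)) (convex_segment x (pr h0 x)).isPreconnected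
      (convex_segment (pr h0 x) (0 : En n)).isPreconnected
  have hsub : ∀ x ∈ WS k h0, T x ⊆ WS k h0 := by
    intro x hx
    exact union_subset (seg1_sub h0 hx) (seg2_sub h0)
  have heq : WS k h0 = ⋃₀ (T '' WS k h0) := by
    apply subset_antisymm
    · intro x hx
      exact ⟨T x, ⟨x, hx, rfl⟩, hself x⟩
    · rintro z ⟨S, ⟨x, hx, rfl⟩, hz⟩
      exact hsub x hx hz
  rw [heq]
  refine isPreconnected_sUnion 0 _ ?_ ?_
  · rintro S ⟨x, hx, rfl⟩; exact hzero x
  · rintro S ⟨x, hx, rfl⟩; exact hpre x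

lemma connectedComponentIn_eq_left {α : Type*} [TopologicalSpace α] {U V : Set α}
    (hU : IsOpen U) (hV : IsOpen V) (hd : U ∩ V = ∅) (hpre : IsPreconnected U)
    {x : α} (hx : x ∈ U) : connectedComponentIn (U ∪ V) x = U := by
  apply subset_antisymm
  · have hsub := connectedComponentIn_subset (U ∪ V) x
    have hc : IsPreconnected (connectedComponentIn (U ∪ V) x) :=
      isPreconnected_connectedComponentIn
    intro z hz
    by_contra hzU
    have hzV : z ∈ V := (hsub hz).resolve_left hzU
    obtain ⟨w, hw⟩ := hc U V hU hV hsub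
      ⟨x, mem_connectedComponentIn (Or.inl hx), hx⟩ ⟨z, hz, hzV⟩
    have : w ∈ U ∩ V := hw.2
    simp [hd] at this
  · exact hpre.subset_connectedComponentIn hx subset_union_left

end HypAux

open HypAux

/-- for 2 ≤ k ≤ n, the complement of Q = {x : x₁² − x₂² − ⋯ − x_k² = 1}
in ℝⁿ has exactly three connected components U₊, U₋, W, and U₊, U₋ are convex. -/
theorem components_of_two_sheeted_hyperboloid
    {n k : ℕ} (hn : 2 ≤ n) (hk2 : 2 ≤ k) (hkn : k ≤ n)
    (Q Up Um W : Set (En n))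
    (hQ : Q = {x : En n | x ⟨0, by omega⟩ ^ 2 -
      ∑ i ∈ Finset.univ.filter (fun i : Fin n => 1 ≤ (i : ℕ) ∧ (i : ℕ) < k), x i ^ 2 = 1})
    (hUp : Up = {x : En n | Real.sqrt
      ((∑ i ∈ Finset.univ.filter (fun i : Fin n => 1 ≤ (i : ℕ) ∧ (i : ℕ) < k), x i ^ 2) + 1)
        < x ⟨0, by omega⟩})
    (hUm : Um = {x : En n | x ⟨0, by omega⟩ < -Real.sqrt
      ((∑ i ∈ Finset.univ.filter (fun i : Fin n => 1 ≤ (i : ℕ) ∧ (i : ℕ) < k), x i ^ 2) + 1)})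
    (hW : W = {x : En n | x ⟨0, by omega⟩ ^ 2 -
      ∑ i ∈ Finset.univ.filter (fun i : Fin n => 1 ≤ (i : ℕ) ∧ (i : ℕ) < k), x i ^ 2 < 1}) :
    componentsIn Qᶜ = {Up, Um, W} ∧ Up ≠ Um ∧ Up ≠ W ∧ Um ≠ W ∧
      Convex ℝ Up ∧ Convex ℝ Um := by
  have h0 : 0 < n := by omega
  have hQ' : Q = QS k h0 := hQ
  have hUp' : Up = UpS k h0 := hUp
  have hUm' : Um = UmS k h0 := hUm
  have hW' : W = WS k h0 := hW
  clear hQ hUp hUm hW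
  have hc1 : (QS k h0)ᶜ = UpS k h0 ∪ (UmS k h0 ∪ WS k h0) := compl_eq h0
  have hc2 : (QS k h0)ᶜ = UmS k h0 ∪ (UpS k h0 ∪ WS k h0) := by
    rw [hc1]; ext z; simp only [mem_union]; tauto
  have hc3 : (QS k h0)ᶜ = WS k h0 ∪ (UpS k h0 ∪ UmS k h0) := by
    rw [hc1]; ext z; simp only [mem_union]; tauto
  have d1 : UpS k h0 ∩ (UmS k h0 ∪ WS k h0) = ∅ := by
    ext z
    simp only [mem_inter_iff, mem_union, mem_empty_iff_false, iff_false, not_and]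
    rintro h1 (h2 | h2)
    exacts [not_mem_pm h0 h1 h2, not_mem_pw h0 h1 h2]
  have d2 : UmS k h0 ∩ (UpS k h0 ∪ WS k h0) = ∅ := by
    ext z
    simp only [mem_inter_iff, mem_union, mem_empty_iff_false, iff_false, not_and]
    rintro h1 (h2 | h2)
    exacts [not_mem_pm h0 h2 h1, not_mem_mw h0 h1 h2]
  have d3 : WS k h0 ∩ (UpS k h0 ∪ UmS k h0) = ∅ := by
    ext z
    simp only [mem_inter_iff, mem_union, mem_empty_iff_false, iff_false, not_and]
    rintro h1 (h2 | h2)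
    exacts [not_mem_pw h0 h2 h1, not_mem_mw h0 h2 h1]
  refine ⟨?_, ?_, ?_, ?_, ?_, ?_⟩
  · ext C
    simp only [componentsIn, mem_setOf_eq, mem_insert_iff, mem_singleton_iff]
    constructor
    · rintro ⟨x, hxQ, rfl⟩
      rw [hQ', hc1] at hxQ
      rw [hQ']
      rcases (mem_union _ _ _).mp hxQ with h | h'
      · left
        rw [hUp', hc1]
        exact connectedComponentIn_eq_left (open_up h0) ((open_um h0).union (open_w h0))
          d1 (convex_up h0).isPreconnected h
      · rcases (mem_union _ _ _).mp h' with h | h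
        · right; left
          rw [hUm', hc2]
          exact connectedComponentIn_eq_left (open_um h0) ((open_up h0).union (open_w h0))
            d2 (convex_um h0).isPreconnected h
        · right; right
          rw [hW', hc3]
          exact connectedComponentIn_eq_left (open_w h0) ((open_up h0).union (open_um h0))
            d3 (preconn_w h0) h
    · rintro (rfl | rfl | rfl)
      · refine ⟨pt h0 2, ?_, ?_⟩
        · rw [hQ', hc1]; exact Or.inl (pt_mem_up h0)
        · rw [hQ', hUp', hc1]
          exact (connectedComponentIn_eq_left (open_up h0) ((open_um h0).union (open_w h0))
            d1 (convex_up h0).isPreconnected (pt_mem_up h0)).symm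
      · refine ⟨pt h0 (-2), ?_, ?_⟩
        · rw [hQ', hc2]; exact Or.inl (pt_mem_um h0)
        · rw [hQ', hUm', hc2]
          exact (connectedComponentIn_eq_left (open_um h0) ((open_up h0).union (open_w h0))
            d2 (convex_um h0).isPreconnected (pt_mem_um h0)).symm
      · refine ⟨0, ?_, ?_⟩
        · rw [hQ', hc3]; exact Or.inl (zero_mem_w h0)
        · rw [hQ', hW', hc3]
          exact (connectedComponentIn_eq_left (open_w h0) ((open_up h0).union (open_um h0))
            d3 (preconn_w h0) (zero_mem_w h0)).symm
  · intro h
    have h1 : pt h0 2 ∈ UmS k h0 := by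
      rw [← hUm', ← h, hUp']; exact pt_mem_up h0
    exact pt_not_mem_um h0 h1
  · intro h
    have h1 : pt h0 2 ∈ WS k h0 := by
      rw [← hW', ← h, hUp']; exact pt_mem_up h0
    exact pt_not_mem_w h0 h1
  · intro h
    have h1 : pt h0 (-2) ∈ WS k h0 := by
      rw [← hW', ← h, hUm']; exact pt_mem_um h0
    exact ptm_not_mem_w h0 h1
  · rw [hUp']; exact convex_up h0
  · rw [hUm']; exact convex_um h0
end
end

section
/- Let n ≥ 3 and 2 ≤ k ≤ n − 1, and let Q = {x ∈ ℝⁿ : x₁² + ⋯ + x_k² − x_{k+1}² − ⋯ − xₙ² = 1}. Then ℝⁿ \ Q has exactly two connected components, namely {x : x₁² + ⋯ + x_k² − x_{k+1}² − ⋯ − xₙ² < 1} and {x : x₁² + ⋯ + x_k² − x_{k+1}² − ⋯ − xₙ² > 1}, and neither of these two components is convex. -/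
open Set Metric

noncomputable section

namespace HypAux

variable {n k : ℕ}

def s1 (k : ℕ) (x : En n) : ℝ :=
  ∑ i ∈ Finset.univ.filter (fun i : Fin n => (i : ℕ) < k), x i ^ 2

def s2 (k : ℕ) (x : En n) : ℝ :=
  ∑ i ∈ Finset.univ.filter (fun i : Fin n => k ≤ (i : ℕ)), x i ^ 2

lemma s1_nonneg (x : En n) : 0 ≤ s1 k x := Finset.sum_nonneg fun _ _ => sq_nonneg _
lemma s2_nonneg (x : En n) : 0 ≤ s2 k x := Finset.sum_nonneg fun _ _ => sq_nonneg _

lemma s1_cont : Continuous (s1 k : En n → ℝ) :=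
  continuous_finset_sum _ fun i _ => (by fun_prop : Continuous fun a : En n => a.ofLp i ^ 2)

lemma s2_cont : Continuous (s2 k : En n → ℝ) :=
  continuous_finset_sum _ fun i _ => (by fun_prop : Continuous fun a : En n => a.ofLp i ^ 2)

/-- zero out the first `k` coordinates -/
def zu (k : ℕ) (x : En n) : En n := WithLp.toLp 2 (fun i : Fin n => if (i : ℕ) < k then 0 else x i)

/-- zero out the coordinates from `k` on -/
def zv (k : ℕ) (x : En n) : En n := WithLp.toLp 2 (fun i : Fin n => if (i : ℕ) < k then x i else 0)

lemma comb_apply (a b : ℝ) (x y : En n) (i : Fin n) :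
    (a • x + b • y) i = a * x i + b * y i := rfl

lemma smul_apply' (a : ℝ) (x : En n) (i : Fin n) : (a • x) i = a * x i := rfl

/- C₁ segment 1 -/
lemma seg1_C1 (x : En n) (hx : s1 k x - s2 k x < 1) :
    segment ℝ x (zu k x) ⊆ {y : En n | s1 k y - s2 k y < 1} := by
  rintro z ⟨a, b, ha, hb, hab, rfl⟩
  have hz1 : s1 k (a • x + b • zu k x) = a ^ 2 * s1 k x := by
    unfold s1
    rw [Finset.mul_sum]
    refine Finset.sum_congr rfl fun i hi => ?_
    simp only [Finset.mem_filter] at hi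
    rw [comb_apply]
    simp only [zu, PiLp.toLp_apply, if_pos hi.2]
    ring
  have hz2 : s2 k (a • x + b • zu k x) = s2 k x := by
    unfold s2
    refine Finset.sum_congr rfl fun i hi => ?_
    simp only [Finset.mem_filter] at hi
    rw [comb_apply]
    simp only [zu, PiLp.toLp_apply, if_neg (not_lt.2 hi.2)]
    rw [← add_mul, hab, one_mul]
  have ha2 : a ^ 2 ≤ 1 := by nlinarith
  have h0 := s1_nonneg (k := k) x
  simp only [Set.mem_setOf_eq, hz1, hz2]
  nlinarith

/- C₁ segment 2 -/
lemma seg2_C1 (x : En n) :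
    segment ℝ (zu k x) (0 : En n) ⊆ {y : En n | s1 k y - s2 k y < 1} := by
  rintro z ⟨a, b, ha, hb, hab, rfl⟩
  have hz1 : s1 k (a • zu k x + b • (0 : En n)) = 0 := by
    unfold s1
    refine Finset.sum_eq_zero fun i hi => ?_
    simp only [Finset.mem_filter] at hi
    rw [comb_apply]
    simp [zu, if_pos hi.2]
  have hz2 : s2 k (a • zu k x + b • (0 : En n)) = a ^ 2 * s2 k x := by
    unfold s2
    rw [Finset.mul_sum]
    refine Finset.sum_congr rfl fun i hi => ?_
    simp only [Finset.mem_filter] at hi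
    rw [comb_apply]
    simp only [zu, PiLp.toLp_apply, if_neg (not_lt.2 hi.2)]
    have : (0 : En n) i = 0 := rfl
    rw [this]
    ring
  have h0 := s2_nonneg (k := k) x
  simp only [Set.mem_setOf_eq, hz1, hz2]
  nlinarith

/- C₂ segment 1 -/
lemma seg1_C2 (x : En n) (hx : 1 < s1 k x - s2 k x) :
    segment ℝ x (zv k x) ⊆ {y : En n | 1 < s1 k y - s2 k y} := by
  rintro z ⟨a, b, ha, hb, hab, rfl⟩
  have hz1 : s1 k (a • x + b • zv k x) = s1 k x := by
    unfold s1
    refine Finset.sum_congr rfl fun i hi => ?_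
    simp only [Finset.mem_filter] at hi
    rw [comb_apply]
    simp only [zv, PiLp.toLp_apply, if_pos hi.2]
    rw [← add_mul, hab, one_mul]
  have hz2 : s2 k (a • x + b • zv k x) = a ^ 2 * s2 k x := by
    unfold s2
    rw [Finset.mul_sum]
    refine Finset.sum_congr rfl fun i hi => ?_
    simp only [Finset.mem_filter] at hi
    rw [comb_apply]
    simp only [zv, PiLp.toLp_apply, if_neg (not_lt.2 hi.2)]
    ring
  have ha2 : a ^ 2 ≤ 1 := by nlinarith
  have h0 := s2_nonneg (k := k) x
  simp only [Set.mem_setOf_eq, hz1, hz2]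
  nlinarith

/- properties of zv and scalings -/
lemma s1_smul (c : ℝ) (x : En n) : s1 k (c • x) = c ^ 2 * s1 k x := by
  unfold s1
  rw [Finset.mul_sum]
  refine Finset.sum_congr rfl fun i _ => ?_
  rw [smul_apply']; ring

lemma s1_zv (x : En n) : s1 k (zv k x) = s1 k x := by
  unfold s1
  refine Finset.sum_congr rfl fun i hi => ?_
  simp only [Finset.mem_filter] at hi
  simp [zv, if_pos hi.2]

lemma s2_zv (x : En n) : s2 k (zv k x) = 0 := by
  refine Finset.sum_eq_zero fun i hi => ?_
  simp only [Finset.mem_filter] at hi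
  simp [zv, if_neg (not_lt.2 hi.2)]

lemma zv_coords (x : En n) (i : Fin n) (hi : k ≤ (i : ℕ)) : zv k x i = 0 := by
  simp [zv, if_neg (not_lt.2 hi)]

/- C₂ segment 2 : from zv x to (2/√(s1 x)) • zv x -/
lemma seg2_C2 (x : En n) (hx : 1 < s1 k x) :
    segment ℝ (zv k x) ((2 / Real.sqrt (s1 k x)) • zv k x) ⊆
      {y : En n | 1 < s1 k y - s2 k y} := by
  set m := Real.sqrt (s1 k x) with hm
  have hm2 : m ^ 2 = s1 k x := Real.sq_sqrt (by linarith)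
  have hm1 : 1 < m := by
    nlinarith [Real.sqrt_nonneg (s1 k x)]
  rintro z ⟨a, b, ha, hb, hab, rfl⟩
  have hcomb : a • zv k x + b • ((2 / m) • zv k x) = (a + b * (2 / m)) • zv k x := by
    rw [smul_smul, ← add_smul]
  rw [hcomb]
  set c := a + b * (2 / m) with hc
  have hs1 : s1 k ((c : ℝ) • zv k x) = c ^ 2 * s1 k x := by
    rw [s1_smul, s1_zv]
  have hs2 : s2 k ((c : ℝ) • zv k x) = 0 := by
    refine Finset.sum_eq_zero fun i hi => ?_
    simp only [Finset.mem_filter] at hi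
    rw [smul_apply', zv_coords x i hi.2]
    ring
  have hmne : m ≠ 0 := by linarith
  have hcm : 1 < c * m := by
    have : c * m = a * m + 2 * b := by
      rw [hc, add_mul, mul_assoc, div_mul_cancel₀ 2 hmne]; ring
    rcases eq_or_lt_of_le hb with hb0 | hb0
    · have haa : a = 1 := by linarith
      rw [this, ← hb0, haa]; linarith
    · nlinarith
  have : 1 < (c * m) ^ 2 := by nlinarith
  simp only [Set.mem_setOf_eq, hs1, hs2]
  nlinarith

/- the reference sphere -/
def Sph (n k : ℕ) : Set (En n) :=
  {x : En n | s1 k x = 4 ∧ ∀ i : Fin n, k ≤ (i : ℕ) → x i = 0}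

lemma Sph_subset (x : En n) (hx : x ∈ Sph n k) : 1 < s1 k x - s2 k x := by
  have h2 : s2 k x = 0 := by
    refine Finset.sum_eq_zero fun i hi => ?_
    simp only [Finset.mem_filter] at hi
    rw [hx.2 i hi.2]; ring
  rw [hx.1, h2]; norm_num

lemma endpoint_mem_Sph (x : En n) (hx : 1 < s1 k x) :
    (2 / Real.sqrt (s1 k x)) • zv k x ∈ Sph n k := by
  have hm2 : Real.sqrt (s1 k x) ^ 2 = s1 k x := Real.sq_sqrt (by linarith)
  have hmne : Real.sqrt (s1 k x) ≠ 0 := by nlinarith [Real.sqrt_nonneg (s1 k x)]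
  constructor
  · rw [s1_smul, s1_zv]
    field_simp
    nlinarith
  · intro i hi
    rw [smul_apply', zv_coords x i hi]; ring

/- the embedding from ℝ^k -/
def phi (n k : ℕ) (hkn : k ≤ n) : EuclideanSpace ℝ (Fin k) →ₗ[ℝ] En n where
  toFun u := WithLp.toLp 2 (fun i : Fin n => if h : (i : ℕ) < k then u ⟨i, h⟩ else 0)
  map_add' u v := PiLp.ext fun i => by
    show (if h : (i : ℕ) < k then (u + v) ⟨i, h⟩ else 0) =
      (if h : (i : ℕ) < k then u ⟨i, h⟩ else 0) + (if h : (i : ℕ) < k then v ⟨i, h⟩ else 0)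
    split <;> simp
  map_smul' c u := PiLp.ext fun i => by
    show (if h : (i : ℕ) < k then (c • u) ⟨i, h⟩ else 0) =
      c * (if h : (i : ℕ) < k then u ⟨i, h⟩ else 0)
    split <;> simp


lemma filter_lt_eq_image (hkn : k ≤ n) :
    Finset.univ.filter (fun i : Fin n => (i : ℕ) < k) =
      Finset.image (Fin.castLE hkn) Finset.univ := by
  ext i
  simp only [Finset.mem_filter, Finset.mem_univ, true_and, Finset.mem_image]
  constructor
  · intro h
    exact ⟨⟨(i : ℕ), h⟩, Fin.ext rfl⟩
  · rintro ⟨j, rfl⟩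
    exact j.2.trans_le hkn |>.trans_le le_rfl |> fun _ => j.2

lemma sum_filter_lt (hkn : k ≤ n) (g : Fin n → ℝ) :
    ∑ i ∈ Finset.univ.filter (fun i : Fin n => (i : ℕ) < k), g i =
      ∑ j : Fin k, g (Fin.castLE hkn j) := by
  rw [filter_lt_eq_image hkn, Finset.sum_image (fun a _ b _ h => Fin.castLE_injective hkn h)]

lemma phi_castLE (hkn : k ≤ n) (u : EuclideanSpace ℝ (Fin k)) (j : Fin k) :
    phi n k hkn u (Fin.castLE hkn j) = u j := by
  rcases j with ⟨jv, hj⟩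
  exact dif_pos hj

lemma s1_phi (hkn : k ≤ n) (u : EuclideanSpace ℝ (Fin k)) :
    s1 k (phi n k hkn u) = ∑ j : Fin k, u j ^ 2 := by
  unfold s1
  rw [sum_filter_lt hkn]
  exact Finset.sum_congr rfl fun j _ => by rw [phi_castLE]

lemma Sph_eq_image (hkn : k ≤ n) :
    Sph n k = (phi n k hkn) '' (Metric.sphere (0 : EuclideanSpace ℝ (Fin k)) 2) := by
  ext x
  constructor
  · rintro ⟨h4, h0⟩
    refine ⟨WithLp.toLp 2 (fun j => x (Fin.castLE hkn j)), ?_, ?_⟩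
    · rw [mem_sphere_zero_iff_norm]
      have hsum : ∑ j : Fin k, ‖x (Fin.castLE hkn j)‖ ^ 2 = 4 := by
        rw [show (∑ j : Fin k, ‖x (Fin.castLE hkn j)‖ ^ 2) =
            ∑ j : Fin k, (x (Fin.castLE hkn j)) ^ 2 from
          Finset.sum_congr rfl fun j _ => by rw [Real.norm_eq_abs, sq_abs]]
        rw [← sum_filter_lt hkn (fun i => x i ^ 2)]; exact h4
      rw [EuclideanSpace.norm_eq]
      rw [show (∑ j : Fin k, ‖(WithLp.toLp 2 (fun j => x (Fin.castLE hkn j)) :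
            EuclideanSpace ℝ (Fin k)) j‖ ^ 2) = 4 from hsum]
      rw [show (4 : ℝ) = 2 ^ 2 by norm_num, Real.sqrt_sq (by norm_num)]
    · ext i
      show (if h : (i : ℕ) < k then x (Fin.castLE hkn ⟨(i : ℕ), h⟩) else 0) = x i
      split
      · exact congrArg x (Fin.ext rfl)
      · exact (h0 i (not_lt.1 (by assumption))).symm
  · rintro ⟨u, hu, rfl⟩
    rw [mem_sphere_zero_iff_norm] at hu
    constructor
    · rw [s1_phi]
      have h2 : ‖u‖ ^ 2 = ∑ j : Fin k, u j ^ 2 := by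
        rw [EuclideanSpace.norm_eq, Real.sq_sqrt (Finset.sum_nonneg fun _ _ => sq_nonneg _)]
        exact Finset.sum_congr rfl fun j _ => by rw [Real.norm_eq_abs, sq_abs]
      rw [hu] at h2
      nlinarith
    · intro i hi
      show (if h : (i : ℕ) < k then u ⟨(i : ℕ), h⟩ else 0) = 0
      rw [dif_neg (not_lt.2 hi)]

lemma Sph_isConnected (hk2 : 2 ≤ k) (hkn : k ≤ n) : IsConnected (Sph n k) := by
  rw [Sph_eq_image hkn]
  have hrank : 1 < Module.rank ℝ (EuclideanSpace ℝ (Fin k)) := by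
    rw [← Module.finrank_eq_rank, finrank_euclideanSpace_fin]
    exact_mod_cast (by omega : 1 < k)
  exact (isConnected_sphere hrank 0 (by norm_num)).image _
    (phi n k hkn).continuous_of_finiteDimensional.continuousOn


/-! ### special points -/

def sing (n : ℕ) (c : ℝ) (i₀ : Fin n) : En n := WithLp.toLp 2 (fun i => if i = i₀ then c else 0)

lemma s1_sing (c : ℝ) (i₀ : Fin n) :
    s1 k (sing n c i₀) = if (i₀ : ℕ) < k then c ^ 2 else 0 := by
  unfold s1 sing
  rw [show (∑ i ∈ Finset.univ.filter (fun i : Fin n => (i : ℕ) < k),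
      (if i = i₀ then c else 0) ^ 2) =
      ∑ i ∈ Finset.univ.filter (fun i : Fin n => (i : ℕ) < k),
      (if i = i₀ then c ^ 2 else 0) from
    Finset.sum_congr rfl fun i _ => by split <;> ring]
  rw [Finset.sum_ite_eq']
  simp [Finset.mem_filter]

lemma s2_sing (c : ℝ) (i₀ : Fin n) :
    s2 k (sing n c i₀) = if k ≤ (i₀ : ℕ) then c ^ 2 else 0 := by
  unfold s2 sing
  rw [show (∑ i ∈ Finset.univ.filter (fun i : Fin n => k ≤ (i : ℕ)),
      (if i = i₀ then c else 0) ^ 2) =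
      ∑ i ∈ Finset.univ.filter (fun i : Fin n => k ≤ (i : ℕ)),
      (if i = i₀ then c ^ 2 else 0) from
    Finset.sum_congr rfl fun i _ => by split <;> ring]
  rw [Finset.sum_ite_eq']
  simp [Finset.mem_filter]

lemma s1_zero : s1 k (0 : En n) = 0 :=
  Finset.sum_eq_zero fun i _ => by show (0 : ℝ) ^ 2 = 0; ring

lemma s2_zero : s2 k (0 : En n) = 0 :=
  Finset.sum_eq_zero fun i _ => by show (0 : ℝ) ^ 2 = 0; ring

def dbl (n : ℕ) (c : ℝ) : En n := WithLp.toLp 2 (fun i : Fin n => if (i : ℕ) = 0 then 2 else if (i : ℕ) = n - 1 then c else 0)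

lemma s1_dbl (hn : 3 ≤ n) (hk2 : 2 ≤ k) (hkn : k ≤ n - 1) (c : ℝ) :
    s1 k (dbl n c) = 4 := by
  unfold s1
  rw [Finset.sum_eq_single_of_mem (⟨0, by omega⟩ : Fin n)
    (by simp [Finset.mem_filter]; omega)]
  · show (if (0 : ℕ) = 0 then (2:ℝ) else if (0 : ℕ) = n - 1 then c else 0) ^ 2 = 4
    norm_num
  · intro b hb hb0
    simp only [Finset.mem_filter, Finset.mem_univ, true_and] at hb
    have h1 : (b : ℕ) ≠ 0 := fun h => hb0 (Fin.ext h)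
    have h2 : (b : ℕ) ≠ n - 1 := by omega
    show (if (b : ℕ) = 0 then (2:ℝ) else if (b : ℕ) = n - 1 then c else 0) ^ 2 = 0
    rw [if_neg h1, if_neg h2]; ring

lemma s2_dbl (hn : 3 ≤ n) (hk2 : 2 ≤ k) (hkn : k ≤ n - 1) (c : ℝ) :
    s2 k (dbl n c) = c ^ 2 := by
  unfold s2
  rw [Finset.sum_eq_single_of_mem (⟨n - 1, by omega⟩ : Fin n)
    (by simp [Finset.mem_filter]; omega)]
  · show (if (n - 1 : ℕ) = 0 then (2:ℝ) else if (n - 1 : ℕ) = n - 1 then c else 0) ^ 2 = c ^ 2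
    rw [if_neg (by omega), if_pos rfl]
  · intro b hb hb0
    simp only [Finset.mem_filter, Finset.mem_univ, true_and] at hb
    have h1 : (b : ℕ) ≠ 0 := by omega
    have h2 : (b : ℕ) ≠ n - 1 := by
      intro h
      exact hb0 (Fin.ext h)
    show (if (b : ℕ) = 0 then (2:ℝ) else if (b : ℕ) = n - 1 then c else 0) ^ 2 = 0
    rw [if_neg h1, if_neg h2]; ring

lemma dbl_mid (hn : 3 ≤ n) :
    (1/2 : ℝ) • dbl n 2 + (1/2 : ℝ) • dbl n (-2) = dbl n 0 := by
  ext i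
  rw [comb_apply]
  show (1/2 : ℝ) * (if (i : ℕ) = 0 then 2 else if (i : ℕ) = n - 1 then 2 else 0) +
      (1/2 : ℝ) * (if (i : ℕ) = 0 then 2 else if (i : ℕ) = n - 1 then -2 else 0) =
      (if (i : ℕ) = 0 then 2 else if (i : ℕ) = n - 1 then 0 else 0)
  split_ifs <;> norm_num

lemma sing_mid (i₀ : Fin n) :
    (1/2 : ℝ) • sing n 2 i₀ + (1/2 : ℝ) • sing n (-2) i₀ = (0 : En n) := by
  ext i
  rw [comb_apply]
  show (1/2 : ℝ) * (if i = i₀ then 2 else 0) + (1/2 : ℝ) * (if i = i₀ then -2 else 0) = 0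
  split_ifs <;> norm_num

/-! ### connectedness -/

lemma C1_preconnected : IsPreconnected {y : En n | s1 k y - s2 k y < 1} := by
  apply isPreconnected_of_forall (0 : En n)
  intro y hy
  refine ⟨segment ℝ y (zu k y) ∪ segment ℝ (zu k y) 0,
    union_subset (seg1_C1 y hy) (seg2_C1 y),
    Or.inr (right_mem_segment ℝ _ _), Or.inl (left_mem_segment ℝ _ _), ?_⟩
  exact (convex_segment _ _).isPreconnected.union (zu k y)
    (right_mem_segment ℝ _ _) (left_mem_segment ℝ _ _)
    (convex_segment _ _).isPreconnected

lemma C2_preconnected (hk2 : 2 ≤ k) (hkn : k ≤ n) :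
    IsPreconnected {y : En n | 1 < s1 k y - s2 k y} := by
  apply isPreconnected_of_forall_pair
  intro x hx y hy
  have hx1 : 1 < s1 k x := by
    have := s2_nonneg (k := k) x; simp only [Set.mem_setOf_eq] at hx; linarith
  have hy1 : 1 < s1 k y := by
    have := s2_nonneg (k := k) y; simp only [Set.mem_setOf_eq] at hy; linarith
  set P : En n → Set (En n) := fun z =>
    segment ℝ z (zv k z) ∪ segment ℝ (zv k z) ((2 / Real.sqrt (s1 k z)) • zv k z) with hP
  have hPsub : ∀ z, z ∈ {y : En n | 1 < s1 k y - s2 k y} →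
      P z ⊆ {y : En n | 1 < s1 k y - s2 k y} := fun z hz =>
    union_subset (seg1_C2 z hz) (seg2_C2 z (by
      have := s2_nonneg (k := k) z; simp only [Set.mem_setOf_eq] at hz; linarith))
  have hPpre : ∀ z, IsPreconnected (P z) := fun z =>
    (convex_segment _ _).isPreconnected.union (zv k z)
      (right_mem_segment ℝ _ _) (left_mem_segment ℝ _ _)
      (convex_segment _ _).isPreconnected
  have hPz : ∀ z, z ∈ P z := fun z => Or.inl (left_mem_segment ℝ _ _)
  have hPend : ∀ z, 1 < s1 k z → (2 / Real.sqrt (s1 k z)) • zv k z ∈ P z ∩ Sph n k :=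
    fun z hz => ⟨Or.inr (right_mem_segment ℝ _ _), endpoint_mem_Sph z hz⟩
  refine ⟨P x ∪ Sph n k ∪ P y, ?_, ?_, ?_, ?_⟩
  · exact union_subset (union_subset (hPsub x hx) (fun w hw => Sph_subset w hw)) (hPsub y hy)
  · exact Or.inl (Or.inl (hPz x))
  · exact Or.inr (hPz y)
  · have h1 : IsPreconnected (P x ∪ Sph n k) :=
      (hPpre x).union ((2 / Real.sqrt (s1 k x)) • zv k x)
        (hPend x hx1).1 (hPend x hx1).2 (Sph_isConnected hk2 hkn).isPreconnected
    exact h1.union ((2 / Real.sqrt (s1 k y)) • zv k y)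
      (Or.inr (hPend y hy1).2) (hPend y hy1).1 (hPpre y)

end HypAux



open HypAux

/-- for n ≥ 3 and 2 ≤ k ≤ n − 1, the complement of the hyperboloid
Q = {x : x₁² + ⋯ + x_k² − x_{k+1}² − ⋯ − xₙ² = 1} has exactly two connected components,
and neither of them is convex. -/
theorem components_of_one_sheeted_hyperboloid
    {n k : ℕ} (hn : 3 ≤ n) (hk2 : 2 ≤ k) (hkn : k ≤ n - 1)
    (Q C₁ C₂ : Set (En n))
    (hQ : Q = {x : En n |
      (∑ i ∈ Finset.univ.filter (fun i : Fin n => (i : ℕ) < k), x i ^ 2) -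
      (∑ i ∈ Finset.univ.filter (fun i : Fin n => k ≤ (i : ℕ)), x i ^ 2) = 1})
    (hC₁ : C₁ = {x : En n |
      (∑ i ∈ Finset.univ.filter (fun i : Fin n => (i : ℕ) < k), x i ^ 2) -
      (∑ i ∈ Finset.univ.filter (fun i : Fin n => k ≤ (i : ℕ)), x i ^ 2) < 1})
    (hC₂ : C₂ = {x : En n |
      1 < (∑ i ∈ Finset.univ.filter (fun i : Fin n => (i : ℕ) < k), x i ^ 2) -
      (∑ i ∈ Finset.univ.filter (fun i : Fin n => k ≤ (i : ℕ)), x i ^ 2)}) :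
    componentsIn Qᶜ = {C₁, C₂} ∧ C₁ ≠ C₂ ∧ ¬ Convex ℝ C₁ ∧ ¬ Convex ℝ C₂ := by
  have hkn' : k ≤ n := by omega
  have hQ' : Q = {x : En n | s1 k x - s2 k x = 1} := hQ
  have hC₁' : C₁ = {x : En n | s1 k x - s2 k x < 1} := hC₁
  have hC₂' : C₂ = {x : En n | 1 < s1 k x - s2 k x} := hC₂
  clear hQ hC₁ hC₂
  subst hQ' hC₁' hC₂'
  set A : Set (En n) := {x : En n | s1 k x - s2 k x < 1} with hA
  set B : Set (En n) := {x : En n | 1 < s1 k x - s2 k x} with hB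
  have hopen1 : IsOpen A := isOpen_lt (s1_cont.sub s2_cont) continuous_const
  have hopen2 : IsOpen B := isOpen_lt continuous_const (s1_cont.sub s2_cont)
  have hdisj : Disjoint A B := by
    rw [Set.disjoint_left]
    intro x h1 h2
    simp only [hA, hB, Set.mem_setOf_eq] at h1 h2
    linarith
  have hcompl : {x : En n | s1 k x - s2 k x = 1}ᶜ = A ∪ B := by
    ext x
    simp only [Set.mem_compl_iff, Set.mem_setOf_eq, Set.mem_union, hA, hB]
    constructor
    · exact fun h => lt_or_gt_of_ne h
    · rintro (h | h)
      · exact ne_of_lt h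
      · exact ne_of_gt h
  have hpre1 : IsPreconnected A := C1_preconnected
  have hpre2 : IsPreconnected B := C2_preconnected hk2 hkn'
  have h0 : (0 : En n) ∈ A := by
    show s1 k (0 : En n) - s2 k (0 : En n) < 1
    rw [s1_zero, s2_zero]; norm_num
  have i0 : Fin n := ⟨0, by omega⟩
  have hbpt : sing n 2 (⟨0, by omega⟩ : Fin n) ∈ B := by
    show 1 < s1 k (sing n 2 _) - s2 k (sing n 2 _)
    rw [s1_sing, s2_sing]
    rw [if_pos (show ((⟨0, by omega⟩ : Fin n) : ℕ) < k by show 0 < k; omega),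
        if_neg (show ¬ k ≤ ((⟨0, by omega⟩ : Fin n) : ℕ) by show ¬ k ≤ 0; omega)]
    norm_num
  have key1 : ∀ x ∈ A, connectedComponentIn {x : En n | s1 k x - s2 k x = 1}ᶜ x = A := by
    intro x hx
    have hxQ : x ∈ {x : En n | s1 k x - s2 k x = 1}ᶜ := by
      rw [hcompl]; exact Or.inl hx
    apply subset_antisymm
    · have hsub : connectedComponentIn {x : En n | s1 k x - s2 k x = 1}ᶜ x ⊆ A ∪ B :=
        (connectedComponentIn_subset _ x).trans hcompl.subset
      exact isPreconnected_connectedComponentIn.subset_left_of_subset_union hopen1 hopen2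
        hdisj hsub ⟨x, mem_connectedComponentIn hxQ, hx⟩
    · exact hpre1.subset_connectedComponentIn hx
        (by rw [hcompl]; exact Set.subset_union_left)
  have key2 : ∀ x ∈ B, connectedComponentIn {x : En n | s1 k x - s2 k x = 1}ᶜ x = B := by
    intro x hx
    have hxQ : x ∈ {x : En n | s1 k x - s2 k x = 1}ᶜ := by
      rw [hcompl]; exact Or.inr hx
    apply subset_antisymm
    · refine isPreconnected_connectedComponentIn.subset_left_of_subset_union hopen2 hopen1
        hdisj.symm ?_ ⟨x, mem_connectedComponentIn hxQ, hx⟩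
      have hsub : connectedComponentIn {x : En n | s1 k x - s2 k x = 1}ᶜ x ⊆ A ∪ B :=
        (connectedComponentIn_subset _ x).trans hcompl.subset
      exact hsub.trans (Set.union_subset Set.subset_union_right Set.subset_union_left)
    · exact hpre2.subset_connectedComponentIn hx
        (by rw [hcompl]; exact Set.subset_union_right)
  refine ⟨?_, ?_, ?_, ?_⟩
  · ext C
    simp only [componentsIn, Set.mem_setOf_eq, Set.mem_insert_iff, Set.mem_singleton_iff]
    constructor
    · rintro ⟨x, hxQ, rfl⟩
      have hx : x ∈ A ∪ B := by rw [← hcompl]; exact hxQ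
      rcases hx with h | h
      · exact Or.inl (key1 x h)
      · exact Or.inr (key2 x h)
    · rintro (rfl | rfl)
      · exact ⟨0, by rw [hcompl]; exact Or.inl h0, (key1 0 h0).symm⟩
      · exact ⟨_, by rw [hcompl]; exact Or.inr hbpt, (key2 _ hbpt).symm⟩
  · intro h
    have h2 : (0 : En n) ∈ B := h ▸ h0
    have h3 : (1 : ℝ) < s1 k (0 : En n) - s2 k (0 : En n) := h2
    rw [s1_zero, s2_zero] at h3
    linarith
  · intro hc
    have ha : dbl n 2 ∈ A := by
      show s1 k (dbl n 2) - s2 k (dbl n 2) < 1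
      rw [s1_dbl hn hk2 hkn, s2_dbl hn hk2 hkn]; norm_num
    have hb' : dbl n (-2) ∈ A := by
      show s1 k (dbl n (-2)) - s2 k (dbl n (-2)) < 1
      rw [s1_dbl hn hk2 hkn, s2_dbl hn hk2 hkn]; norm_num
    have hm := hc ha hb' (by norm_num : (0:ℝ) ≤ 1/2) (by norm_num : (0:ℝ) ≤ 1/2)
      (by norm_num : (1/2 : ℝ) + 1/2 = 1)
    rw [dbl_mid hn] at hm
    have h3 : s1 k (dbl n 0) - s2 k (dbl n 0) < 1 := hm
    rw [s1_dbl hn hk2 hkn, s2_dbl hn hk2 hkn] at h3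
    norm_num at h3
  · intro hc
    have ha : sing n 2 (⟨0, by omega⟩ : Fin n) ∈ B := hbpt
    have hb' : sing n (-2) (⟨0, by omega⟩ : Fin n) ∈ B := by
      show 1 < s1 k (sing n (-2) _) - s2 k (sing n (-2) _)
      rw [s1_sing, s2_sing]
      rw [if_pos (show ((⟨0, by omega⟩ : Fin n) : ℕ) < k by show 0 < k; omega),
          if_neg (show ¬ k ≤ ((⟨0, by omega⟩ : Fin n) : ℕ) by show ¬ k ≤ 0; omega)]
      norm_num
    have hm := hc ha hb' (by norm_num : (0:ℝ) ≤ 1/2) (by norm_num : (0:ℝ) ≤ 1/2)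
      (by norm_num : (1/2 : ℝ) + 1/2 = 1)
    rw [sing_mid] at hm
    have h3 : (1 : ℝ) < s1 k (0 : En n) - s2 k (0 : En n) := hm
    rw [s1_zero, s2_zero] at h3
    linarith
end
end

section
/- Let n ≥ 4 and 2 ≤ k ≤ n − 2, and let Q = {x ∈ ℝⁿ : x₁² + ⋯ + x_k² = x_{k+1}² + ⋯ + xₙ²}. Then ℝⁿ \ Q has exactly two connected components, namely {x : x₁² + ⋯ + x_k² > x_{k+1}² + ⋯ + xₙ²} and {x : x₁² + ⋯ + x_k² < x_{k+1}² + ⋯ + xₙ²}, and neither of these two components is convex. -/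
open Set Metric

noncomputable section

lemma seg_joinedIn {n : ℕ} {F : Set (En n)} {a b : En n} (ha : a ∈ segment ℝ a b)
    (h : segment ℝ a b ⊆ F) : JoinedIn F a b :=
  (((convex_segment a b).isPathConnected ⟨a, ha⟩).joinedIn a ha b
    (right_mem_segment ℝ a b)).mono h

lemma sum_sq_single {n : ℕ} (p : Fin n → Prop) [DecidablePred p] (i : Fin n) (r : ℝ) :
    (∑ j ∈ Finset.univ.filter p, (EuclideanSpace.single i r : En n) j ^ 2)
      = if p i then r ^ 2 else 0 := by
  have : ∀ j, (EuclideanSpace.single i r : En n) j ^ 2 = if j = i then r ^ 2 else 0 := by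
    intro j
    rw [EuclideanSpace.single_apply, apply_ite (· ^ 2)]
    simp
  simp_rw [this, Finset.sum_ite_eq']
  simp

lemma aux_pc {n : ℕ} (p : Fin n → Prop) [DecidablePred p] (i₀ i₁ : Fin n)
    (hne : i₀ ≠ i₁) (h0 : p i₀) (h1 : p i₁) :
    IsPathConnected {x : En n |
      (∑ i ∈ Finset.univ.filter (fun i => ¬ p i), x i ^ 2) <
      ∑ i ∈ Finset.univ.filter p, x i ^ 2} := by
  set S : Set (En n) := {x : En n |
      (∑ i ∈ Finset.univ.filter (fun i => ¬ p i), x i ^ 2) <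
      ∑ i ∈ Finset.univ.filter p, x i ^ 2} with hS
  set e₀ : En n := EuclideanSpace.single i₀ 1 with he₀
  set e₁ : En n := EuclideanSpace.single i₁ 1 with he₁
  have he₀S : e₀ ∈ S := by
    simp only [hS, mem_setOf_eq, he₀, sum_sq_single]
    simp [h0]
  have he₁S : e₁ ∈ S := by
    simp only [hS, mem_setOf_eq, he₁, sum_sq_single]
    simp [h1]
  -- key : segments between nonzero points supported on p avoiding 0 stay in S
  have key : ∀ b c : En n, (∀ i, ¬ p i → b i = 0) → (∀ i, ¬ p i → c i = 0) →
      (0 : En n) ∉ segment ℝ b c → segment ℝ b c ⊆ S := by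
    rintro b c hb hc h0seg z hz
    obtain ⟨u, v, hu, hv, huv, rfl⟩ := hz
    have hzsupp : ∀ i, ¬ p i → (u • b + v • c) i = 0 := by
      intro i hi
      simp [PiLp.add_apply, PiLp.smul_apply, hb i hi, hc i hi]
    have hzne : (u • b + v • c) ≠ 0 := by
      intro h
      exact h0seg (h ▸ ⟨u, v, hu, hv, huv, rfl⟩)
    have : ∃ i, (u • b + v • c) i ≠ 0 := by
      by_contra hcon
      push_neg at hcon
      exact hzne (by ext i; simpa using hcon i)
    obtain ⟨i, hi⟩ := this
    have hpi : p i := by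
      by_contra hpi
      exact hi (hzsupp i hpi)
    have hleft : (∑ j ∈ Finset.univ.filter (fun j => ¬ p j), (u • b + v • c) j ^ 2) = 0 := by
      apply Finset.sum_eq_zero
      intro j hj
      rw [Finset.mem_filter] at hj
      rw [hzsupp j hj.2]
      ring
    have hright : 0 < ∑ j ∈ Finset.univ.filter p, (u • b + v • c) j ^ 2 := by
      apply Finset.sum_pos' (fun j _ => sq_nonneg _)
      exact ⟨i, by simp [hpi], sq_pos_of_ne_zero hi⟩
    simp only [hS, mem_setOf_eq]
    rw [hleft]
    exact hright
  -- main connection: every x in S is joined to e₀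
  have main : ∀ x ∈ S, JoinedIn S x e₀ := by
    intro x hx
    set a : En n := WithLp.toLp 2 (fun i => if p i then x i else 0 : Fin n → ℝ) with ha
    have hasupp : ∀ i, ¬ p i → a i = 0 := by intro i hi; simp [ha, hi]
    have hseg1 : segment ℝ x a ⊆ S := by
      rintro z ⟨u, v, hu, hv, huv, rfl⟩
      have hzp : ∀ i, p i → (u • x + v • a) i = x i := by
        intro i hi
        have : u • x i + v • x i = x i := by
          rw [smul_eq_mul, smul_eq_mul, ← add_mul, huv, one_mul]
        simpa [PiLp.add_apply, PiLp.smul_apply, ha, hi] using this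
      have hznp : ∀ i, ¬ p i → (u • x + v • a) i = u * x i := by
        intro i hi
        simp [PiLp.add_apply, PiLp.smul_apply, ha, hi]
      have hright : (∑ j ∈ Finset.univ.filter p, (u • x + v • a) j ^ 2)
          = ∑ j ∈ Finset.univ.filter p, x j ^ 2 := by
        apply Finset.sum_congr rfl
        intro j hj
        rw [Finset.mem_filter] at hj
        rw [hzp j hj.2]
      have hleft : (∑ j ∈ Finset.univ.filter (fun j => ¬ p j), (u • x + v • a) j ^ 2)
          = u ^ 2 * ∑ j ∈ Finset.univ.filter (fun j => ¬ p j), x j ^ 2 := by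
        rw [Finset.mul_sum]
        apply Finset.sum_congr rfl
        intro j hj
        rw [Finset.mem_filter] at hj
        rw [hznp j hj.2]
        ring
      have hu1 : u ≤ 1 := by linarith
      have hsq : u ^ 2 ≤ 1 := by nlinarith
      have hnn : (0:ℝ) ≤ ∑ j ∈ Finset.univ.filter (fun j => ¬ p j), x j ^ 2 :=
        Finset.sum_nonneg fun j _ => sq_nonneg _
      have hxS : (∑ j ∈ Finset.univ.filter (fun j => ¬ p j), x j ^ 2)
          < ∑ j ∈ Finset.univ.filter p, x j ^ 2 := hx
      simp only [hS, mem_setOf_eq]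
      rw [hleft, hright]
      calc u ^ 2 * ∑ j ∈ Finset.univ.filter (fun j => ¬ p j), x j ^ 2
          ≤ ∑ j ∈ Finset.univ.filter (fun j => ¬ p j), x j ^ 2 := by nlinarith
        _ < ∑ j ∈ Finset.univ.filter p, x j ^ 2 := hxS
    have j1 : JoinedIn S x a := seg_joinedIn (left_mem_segment ℝ x a) hseg1
    have haS : a ∈ S := hseg1 (right_mem_segment ℝ x a)
    have hane : a ≠ 0 := by
      intro h
      have h2 : ∀ i, p i → x i = 0 := by
        intro i hi
        have := congrArg (fun y : En n => y i) h
        simpa [ha, hi] using this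
      have hzero : (∑ j ∈ Finset.univ.filter p, x j ^ 2) = 0 := by
        apply Finset.sum_eq_zero
        intro j hj
        rw [Finset.mem_filter] at hj
        rw [h2 j hj.2]; ring
      have hnn : (0:ℝ) ≤ ∑ j ∈ Finset.univ.filter (fun j => ¬ p j), x j ^ 2 :=
        Finset.sum_nonneg fun j _ => sq_nonneg _
      have hxlt : (∑ j ∈ Finset.univ.filter (fun j => ¬ p j), x j ^ 2)
          < ∑ j ∈ Finset.univ.filter p, x j ^ 2 := hx
      rw [hzero] at hxlt
      linarith
    have he₀supp : ∀ i, ¬ p i → e₀ i = 0 := by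
      intro i hi
      rw [he₀, EuclideanSpace.single_apply]
      simp only [ite_eq_right_iff]
      intro h; exact absurd (h ▸ h0) hi
    have he₁supp : ∀ i, ¬ p i → e₁ i = 0 := by
      intro i hi
      rw [he₁, EuclideanSpace.single_apply]
      simp only [ite_eq_right_iff]
      intro h; exact absurd (h ▸ h1) hi
    have j2 : JoinedIn S a e₀ := by
      by_cases hcase : (0 : En n) ∈ segment ℝ a e₀
      · -- a is a negative multiple of e₀; go through e₁
        obtain ⟨u, v, hu, hv, huv, hzero⟩ := hcase
        have hune : u ≠ 0 := by
          intro h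
          rw [h, zero_add] at huv
          have h3 := congrArg (fun y : En n => y i₀) hzero
          rw [h, huv] at h3
          simp [he₀, EuclideanSpace.single_apply] at h3
        have hai₁ : a i₁ = 0 := by
          have h3 := congrArg (fun y : En n => y i₁) hzero
          simp only [PiLp.add_apply, PiLp.smul_apply, smul_eq_mul, PiLp.zero_apply] at h3
          rw [he₀, EuclideanSpace.single_apply, if_neg hne.symm, mul_zero, add_zero] at h3
          exact (mul_eq_zero.1 h3).resolve_left hune
        have hseg2 : (0 : En n) ∉ segment ℝ a e₁ := by
          rintro ⟨u', v', hu', hv', huv', hz⟩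
          have h3 := congrArg (fun y : En n => y i₁) hz
          simp only [PiLp.add_apply, PiLp.smul_apply, smul_eq_mul, PiLp.zero_apply] at h3
          rw [hai₁, mul_zero, zero_add, he₁, EuclideanSpace.single_apply, if_pos rfl,
            mul_one] at h3
          rw [h3, add_zero] at huv'
          rw [h3, huv', one_smul, zero_smul, add_zero] at hz
          exact hane hz
        have hseg3 : (0 : En n) ∉ segment ℝ e₁ e₀ := by
          rintro ⟨u', v', hu', hv', huv', hz⟩
          have h3 := congrArg (fun y : En n => y i₀) hz
          simp only [PiLp.add_apply, PiLp.smul_apply, smul_eq_mul, PiLp.zero_apply] at h3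
          rw [he₁, he₀, EuclideanSpace.single_apply, EuclideanSpace.single_apply,
            if_neg hne, if_pos rfl, mul_zero, zero_add, mul_one] at h3
          rw [h3, add_zero] at huv'
          rw [h3, huv', one_smul, zero_smul, add_zero] at hz
          have h4 := congrArg (fun y : En n => y i₁) hz
          simp [he₁, EuclideanSpace.single_apply] at h4
        exact (seg_joinedIn (left_mem_segment ℝ a e₁)
          (key a e₁ hasupp he₁supp hseg2)).trans
          (seg_joinedIn (left_mem_segment ℝ e₁ e₀) (key e₁ e₀ he₁supp he₀supp hseg3))
      · exact seg_joinedIn (left_mem_segment ℝ a e₀) (key a e₀ hasupp he₀supp hcase)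
    exact j1.trans j2
  exact ⟨e₀, he₀S, fun {y} hy => (main y hy).symm⟩

private lemma comp_eq' {α : Type*} [TopologicalSpace α] {u v : Set α} (hu : IsOpen u)
    (hv : IsOpen v) (hd : Disjoint u v) (hpc : IsPreconnected u) {x : α} (hx : x ∈ u) :
    connectedComponentIn (u ∪ v) x = u := by
  apply subset_antisymm
  · exact IsPreconnected.subset_left_of_subset_union hu hv hd
      (connectedComponentIn_subset _ _)
      ⟨x, mem_connectedComponentIn (mem_union_left _ hx), hx⟩
      isPreconnected_connectedComponentIn
  · exact hpc.subset_connectedComponentIn hx subset_union_left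

private lemma cont_sum_sq {n : ℕ} (F : Finset (Fin n)) :
    Continuous (fun x : En n => ∑ i ∈ F, x i ^ 2) :=
  continuous_finset_sum _ fun i _ => ((EuclideanSpace.proj (𝕜 := ℝ) i).continuous).pow 2

/-- for n ≥ 4 and 2 ≤ k ≤ n − 2, the complement of the cone
Q = {x : x₁² + ⋯ + x_k² = x_{k+1}² + ⋯ + xₙ²} has exactly two connected components,
and neither of them is convex. -/
theorem components_of_nonconvex_cone
    {n k : ℕ} (hn : 4 ≤ n) (hk2 : 2 ≤ k) (hkn : k ≤ n - 2)
    (Q C₁ C₂ : Set (En n))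
    (hQ : Q = {x : En n |
      (∑ i ∈ Finset.univ.filter (fun i : Fin n => (i : ℕ) < k), x i ^ 2) =
      (∑ i ∈ Finset.univ.filter (fun i : Fin n => k ≤ (i : ℕ)), x i ^ 2)})
    (hC₁ : C₁ = {x : En n |
      (∑ i ∈ Finset.univ.filter (fun i : Fin n => k ≤ (i : ℕ)), x i ^ 2) <
      (∑ i ∈ Finset.univ.filter (fun i : Fin n => (i : ℕ) < k), x i ^ 2)})
    (hC₂ : C₂ = {x : En n |
      (∑ i ∈ Finset.univ.filter (fun i : Fin n => (i : ℕ) < k), x i ^ 2) <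
      (∑ i ∈ Finset.univ.filter (fun i : Fin n => k ≤ (i : ℕ)), x i ^ 2)}) :
    componentsIn Qᶜ = {C₁, C₂} ∧ C₁ ≠ C₂ ∧ ¬ Convex ℝ C₁ ∧ ¬ Convex ℝ C₂ := by
  have h0n : 0 < n := by omega
  have h1n : 1 < n := by omega
  have hkln : k < n := by omega
  have hk1n : k + 1 < n := by omega
  -- filter identification
  have hfilt : (Finset.univ.filter (fun i : Fin n => k ≤ (i : ℕ)))
      = Finset.univ.filter (fun i : Fin n => ¬ (i : ℕ) < k) := by
    apply Finset.filter_congr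
    intro i _
    simp [not_lt]
  have hfilt' : (Finset.univ.filter (fun i : Fin n => (i : ℕ) < k))
      = Finset.univ.filter (fun i : Fin n => ¬ k ≤ (i : ℕ)) := by
    apply Finset.filter_congr
    intro i _
    simp [not_le]
  -- openness
  have hC₁open : IsOpen C₁ := by
    rw [hC₁]
    exact isOpen_lt (cont_sum_sq _) (cont_sum_sq _)
  have hC₂open : IsOpen C₂ := by
    rw [hC₂]
    exact isOpen_lt (cont_sum_sq _) (cont_sum_sq _)
  have hdisj : Disjoint C₁ C₂ := by
    rw [Set.disjoint_left]
    intro x hx1 hx2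
    rw [hC₁, mem_setOf_eq] at hx1
    rw [hC₂, mem_setOf_eq] at hx2
    exact absurd hx1 (not_lt.2 hx2.le)
  have hQc : Qᶜ = C₁ ∪ C₂ := by
    ext x
    rw [hQ, hC₁, hC₂]
    simp only [mem_compl_iff, mem_setOf_eq, mem_union]
    constructor
    · intro h
      rcases lt_or_gt_of_ne h with h' | h'
      · exact Or.inr h'
      · exact Or.inl h'
    · rintro (h | h) <;> intro he <;> rw [he] at h <;> exact lt_irrefl _ h
  -- path connectedness
  have hpc₁ : IsPreconnected C₁ := by
    have := aux_pc (fun i : Fin n => (i : ℕ) < k) ⟨0, h0n⟩ ⟨1, h1n⟩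
      (by simp [Fin.ext_iff]) (by simpa using by omega) (by simpa using by omega)
    rw [hC₁, hfilt]
    exact this.isConnected.isPreconnected
  have hpc₂ : IsPreconnected C₂ := by
    have := aux_pc (fun i : Fin n => k ≤ (i : ℕ)) ⟨k, hkln⟩ ⟨k + 1, hk1n⟩
      (by simp [Fin.ext_iff]) (by simp) (by simp)
    rw [hC₂, hfilt']
    exact this.isConnected.isPreconnected
  -- base points
  set e₁ : En n := EuclideanSpace.single (⟨0, h0n⟩ : Fin n) 1 with he₁
  set e₂ : En n := EuclideanSpace.single (⟨k, hkln⟩ : Fin n) 1 with he₂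
  have he₁C₁ : e₁ ∈ C₁ := by
    rw [hC₁, mem_setOf_eq, he₁, sum_sq_single, sum_sq_single]
    have hk0 : ¬ k = 0 := by omega
    have hk0' : 0 < k := by omega
    norm_num [hk0, hk0']
  have he₂C₂ : e₂ ∈ C₂ := by
    rw [hC₂, mem_setOf_eq, he₂, sum_sq_single, sum_sq_single]
    norm_num
  have hne₁C₁ : -e₁ ∈ C₁ := by
    rw [hC₁, mem_setOf_eq]
    simp_rw [PiLp.neg_apply, neg_sq]
    rw [he₁, sum_sq_single, sum_sq_single]
    have hk0 : ¬ k = 0 := by omega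
    have hk0' : 0 < k := by omega
    norm_num [hk0, hk0']
  have hne₂C₂ : -e₂ ∈ C₂ := by
    rw [hC₂, mem_setOf_eq]
    simp_rw [PiLp.neg_apply, neg_sq]
    rw [he₂, sum_sq_single, sum_sq_single]
    norm_num
  have hzero₁ : (0 : En n) ∉ C₁ := by
    rw [hC₁, mem_setOf_eq]
    simp
  have hzero₂ : (0 : En n) ∉ C₂ := by
    rw [hC₂, mem_setOf_eq]
    simp
  refine ⟨?_, ?_, ?_, ?_⟩
  · -- components
    rw [hQc]
    ext C
    simp only [componentsIn, mem_setOf_eq, mem_insert_iff, mem_singleton_iff]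
    constructor
    · rintro ⟨x, hx, rfl⟩
      rcases hx with h | h
      · exact Or.inl (comp_eq' hC₁open hC₂open hdisj hpc₁ h)
      · refine Or.inr ?_
        rw [union_comm]
        exact comp_eq' hC₂open hC₁open hdisj.symm hpc₂ h
    · rintro (rfl | rfl)
      · exact ⟨e₁, Or.inl he₁C₁, (comp_eq' hC₁open hC₂open hdisj hpc₁ he₁C₁).symm⟩
      · refine ⟨e₂, Or.inr he₂C₂, ?_⟩
        rw [union_comm]
        exact (comp_eq' hC₂open hC₁open hdisj.symm hpc₂ he₂C₂).symm
  · -- C₁ ≠ C₂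
    intro h
    rw [h] at he₁C₁
    exact (Set.disjoint_left.1 hdisj.symm) he₁C₁ (h ▸ he₁C₁)
  · -- C₁ not convex
    intro hconv
    have := hconv he₁C₁ hne₁C₁ (le_of_lt one_half_pos) (le_of_lt one_half_pos)
      (by norm_num)
    rw [smul_neg, add_neg_cancel] at this
    exact hzero₁ this
  · -- C₂ not convex
    intro hconv
    have := hconv he₂C₂ hne₂C₂ (le_of_lt one_half_pos) (le_of_lt one_half_pos)
      (by norm_num)
    rw [smul_neg, add_neg_cancel] at this
    exact hzero₂ this
end
end

section
/- Let n ≥ 3 and let K ⊆ ℝⁿ be a closed convex set with nonempty interior, K ≠ ℝⁿ, containing no affine line. Let δ : S^{n−1} → ℝ be continuous, H(u) = {x ∈ ℝⁿ : ⟨x, u⟩ = δ(u)}, and assume that for every u ∈ S^{n−1} the set frontier K ∩ H(u) is an (n−1)-dimensional convex quadric in H(u). Then for every (n−2)-dimensional affine subspace L ⊆ ℝⁿ that supports K (i.e., L ∩ K ≠ ∅ and L ∩ interior K = ∅), there exists u ∈ S^{n−1} such that L ⊆ H(u). -/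
open Set Metric RealInnerProductSpace

noncomputable section

/-- `S` is an (n−1)-dimensional convex quadric in the hyperplane `H ⊆ ℝⁿ`:
for some affine isometry φ : ℝ^{n−1} → ℝⁿ with image `H`, the set φ⁻¹(S) is a
convex quadric in ℝ^{n−1}. -/
def IsConvexQuadricIn {n : ℕ} (H S : Set (En n)) : Prop :=
  S ⊆ H ∧ ∃ φ : En (n - 1) →ᵃⁱ[ℝ] En n,
    Set.range (φ : En (n - 1) → En n) = H ∧ IsConvexQuadric ((φ : En (n - 1) → En n) ⁻¹' S)

/-- The hyperplane H(u) = {x : ⟨x, u⟩ = δ(u)} associated to a unit vector u. -/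
def sphHyp {n : ℕ} (δ : sphere (0 : En n) 1 → ℝ) (u : sphere (0 : En n) 1) : Set (En n) :=
  {x : En n | ⟪x, (u : En n)⟫ = δ u}
/-- `K` contains no affine line. -/
def LineFree {n : ℕ} (K : Set (En n)) : Prop :=
  ¬ ∃ (p v : En n), v ≠ 0 ∧ ∀ t : ℝ, p + t • v ∈ K

lemma interior_closure_of_open_convex {E : Type*} [NormedAddCommGroup E] [NormedSpace ℝ E]
    {U : Set E} (hUc : Convex ℝ U) (hUo : IsOpen U) :
    interior (closure U) = U := by
  refine subset_antisymm ?_ (hUo.subset_interior_iff.mpr subset_closure)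
  intro x hx
  rcases U.eq_empty_or_nonempty with rfl | ⟨y, hy⟩
  · simp at hx
  rcases eq_or_ne x y with rfl | hxy
  · exact hy
  obtain ⟨r, hr, hball⟩ := Metric.isOpen_iff.1 isOpen_interior x hx
  have hd0 : (0:ℝ) < ‖x - y‖ := by
    rw [norm_pos_iff, sub_ne_zero]; exact hxy
  set ε : ℝ := r / (2 * ‖x - y‖) with hε_def
  have hε : 0 < ε := by positivity
  set z : E := x + ε • (x - y) with hz_def
  have hz : z ∈ closure U := by
    apply interior_subset
    apply hball
    have : z - x = ε • (x - y) := by rw [hz_def]; abel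
    rw [mem_ball, dist_eq_norm, this, norm_smul, Real.norm_eq_abs, abs_of_pos hε]
    have heq : ε * ‖x - y‖ = r / 2 := by
      rw [hε_def]; field_simp
    rw [heq]; linarith
  have hy' : y ∈ interior U := by rwa [hUo.interior_eq]
  have hmem : x ∈ openSegment ℝ y z := by
    refine ⟨ε/(1+ε), 1/(1+ε), by positivity, by positivity, by field_simp; ring, ?_⟩
    rw [hz_def]
    match_scalars <;> field_simp <;> ring
  have := hUc.openSegment_interior_closure_subset_interior hy' hz hmem
  rw [hUo.interior_eq] at this
  exact this

lemma half_subset {m : ℕ} {U : Set (En m)} (hUo : IsOpen U) (hUc : Convex ℝ U)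
    {v : En m} {c : ℝ} (hfr : ∀ x ∈ frontier U, ⟪x, v⟫ = c)
    {x₀ : En m} (hx₀U : x₀ ∈ U) (hx₀ : ⟪x₀, v⟫ < c) :
    {x : En m | ⟪x, v⟫ < c} ⊆ U := by
  have hcont : Continuous fun x : En m => ⟪x, v⟫ := continuous_id.inner continuous_const
  have hWo : IsOpen {x : En m | ⟪x, v⟫ < c} := isOpen_lt hcont continuous_const
  have hWc : Convex ℝ {x : En m | ⟪x, v⟫ < c} :=
    convex_halfSpace_lt ⟨fun a b => inner_add_left a b v, fun r a => real_inner_smul_left a v r⟩ c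
  have hsub : {x : En m | ⟪x, v⟫ < c} ⊆ U ∪ (closure U)ᶜ := by
    intro x hx
    by_cases hcl : x ∈ closure U
    · left
      have hxf : x ∉ frontier U := fun hf => absurd (hfr x hf) (ne_of_lt hx)
      rw [frontier, mem_diff] at hxf
      push_neg at hxf
      rw [← hUo.interior_eq]
      exact hxf hcl
    · right; exact hcl
  have hkey : ¬ ({x : En m | ⟪x, v⟫ < c} ∩ (closure U)ᶜ).Nonempty := by
    intro hne
    obtain ⟨y, _, hy2⟩ := hWc.isPreconnected U (closure U)ᶜ hUo isClosed_closure.isOpen_compl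
      hsub ⟨x₀, hx₀, hx₀U⟩ hne
    exact hy2.2 (subset_closure hy2.1)
  have hsubcl : {x : En m | ⟪x, v⟫ < c} ⊆ closure U := by
    intro x hx; by_contra h; exact hkey ⟨x, hx, h⟩
  have h2 := hWo.subset_interior_iff.mpr hsubcl
  rwa [interior_closure_of_open_convex hUc hUo] at h2

lemma line_of_halfspace {m : ℕ} (hm : 2 ≤ m) {U : Set (En m)} {v : En m} (hv0 : v ≠ 0) {c : ℝ}
    (hUW : U = {x : En m | ⟪x, v⟫ < c}) :
    ∃ z w : En m, w ≠ 0 ∧ ∀ t : ℝ, z + t • w ∈ frontier U := by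
  have hnv : 0 < ‖v‖ := norm_pos_iff.2 hv0
  have hvv : 0 < ⟪v, v⟫ := by rw [real_inner_self_eq_norm_mul_norm]; exact mul_pos hnv hnv
  have hP : ∀ x : En m, ⟪x, v⟫ = c → x ∈ frontier U := by
    intro x hx
    rw [frontier_eq_closure_inter_closure]
    constructor
    · rw [Metric.mem_closure_iff]
      intro ε hε
      refine ⟨x - (ε / (2 * ‖v‖)) • v, ?_, ?_⟩
      · rw [hUW]
        have ht : 0 < ε / (2 * ‖v‖) := by positivity
        simp only [mem_setOf_eq, inner_sub_left, real_inner_smul_left, hx]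
        nlinarith
      · have : x - (x - (ε / (2 * ‖v‖)) • v) = (ε / (2 * ‖v‖)) • v := by abel
        rw [dist_eq_norm, this, norm_smul, Real.norm_eq_abs,
          abs_of_pos (by positivity : (0:ℝ) < ε / (2 * ‖v‖))]
        have : ε / (2 * ‖v‖) * ‖v‖ = ε / 2 := by field_simp
        rw [this]; linarith
    · apply subset_closure
      rw [hUW]
      simp only [mem_compl_iff, mem_setOf_eq, hx, lt_self_iff_false, not_false_iff]
  obtain ⟨w, hwmem, hw0⟩ : ∃ w ∈ (ℝ ∙ v)ᗮ, w ≠ 0 := by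
    have hspan : (ℝ ∙ v) ≠ ⊤ := by
      intro h
      have h1 : Module.finrank ℝ (ℝ ∙ v) = 1 := finrank_span_singleton hv0
      have h2 : Module.finrank ℝ (En m) = m := finrank_euclideanSpace_fin
      rw [h, finrank_top] at h1
      omega
    have : (ℝ ∙ v)ᗮ ≠ ⊥ := by
      simpa [Submodule.orthogonal_eq_bot_iff] using hspan
    exact (Submodule.ne_bot_iff _).1 this
  have hwv : ⟪w, v⟫ = 0 := by
    rw [real_inner_comm]
    exact (Submodule.mem_orthogonal _ w).1 hwmem v (Submodule.mem_span_singleton_self v)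
  refine ⟨(c / ⟪v, v⟫) • v, w, hw0, fun t => hP _ ?_⟩
  rw [inner_add_left, real_inner_smul_left, real_inner_smul_left, hwv, mul_zero, add_zero,
    div_mul_cancel₀ _ hvv.ne']

lemma frontier_line {m : ℕ} (hm : 2 ≤ m) {U : Set (En m)} (hUo : IsOpen U) (hUc : Convex ℝ U)
    (hne : U.Nonempty) (hnu : U ≠ univ) (hfc : Convex ℝ (frontier U)) :
    ∃ z w : En m, w ≠ 0 ∧ ∀ t : ℝ, z + t • w ∈ frontier U := by
  have hfne : (frontier U).Nonempty := nonempty_frontier_iff.2 ⟨hne, hnu⟩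
  obtain ⟨a, ha⟩ := hfne
  have hicl := interior_closure_of_open_convex hUc hUo
  have hfrcl : frontier U = frontier (closure U) := by
    rw [frontier, frontier, closure_closure, hicl, hUo.interior_eq]
  have hif : interior (frontier U) = ∅ := by
    rw [hfrcl]; exact interior_frontier isClosed_closure
  have hspan : affineSpan ℝ (frontier U) ≠ ⊤ := by
    intro h
    have h2 := hfc.interior_nonempty_iff_affineSpan_eq_top.2 h
    rw [hif] at h2
    exact h2.ne_empty rfl
  have hdir : (affineSpan ℝ (frontier U)).direction ≠ ⊤ := by
    intro h
    exact hspan ((AffineSubspace.direction_eq_top_iff_of_nonempty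
      ((affineSpan_nonempty (k := ℝ)).2 ⟨a, ha⟩)).1 h)
  obtain ⟨v, hvD, hv0⟩ : ∃ v ∈ (affineSpan ℝ (frontier U)).directionᗮ, v ≠ 0 := by
    have hne' : (affineSpan ℝ (frontier U)).directionᗮ ≠ ⊥ := by
      simpa [Submodule.orthogonal_eq_bot_iff] using hdir
    exact (Submodule.ne_bot_iff _).1 hne'
  have hnv : 0 < ‖v‖ := norm_pos_iff.2 hv0
  have hvv : 0 < ⟪v, v⟫ := by rw [real_inner_self_eq_norm_mul_norm]; exact mul_pos hnv hnv
  set c : ℝ := ⟪a, v⟫ with hc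
  have hfr : ∀ x ∈ frontier U, ⟪x, v⟫ = c := by
    intro x hx
    have hxa : x - a ∈ (affineSpan ℝ (frontier U)).direction := by
      have h3 := AffineSubspace.vsub_mem_direction (mem_affineSpan ℝ hx) (mem_affineSpan ℝ ha)
      simpa [vsub_eq_sub] using h3
    have h0 : ⟪x - a, v⟫ = 0 := (Submodule.mem_orthogonal _ v).1 hvD _ hxa
    rw [inner_sub_left] at h0
    linarith
  have hfr' : ∀ x ∈ frontier U, ⟪x, -v⟫ = -c := by
    intro x hx; rw [inner_neg_right, hfr x hx]
  have hmid : ∀ x ∈ U, ⟪x, v⟫ = c → (∃ y ∈ U, ⟪y, v⟫ < c) ∧ (∃ y ∈ U, c < ⟪y, v⟫) := by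
    intro x hxU hxc
    obtain ⟨r, hr, hball⟩ := Metric.isOpen_iff.1 hUo x hxU
    set t : ℝ := r / (2 * ‖v‖) with ht_def
    have ht : 0 < t := by positivity
    have hdist : t * ‖v‖ = r / 2 := by rw [ht_def]; field_simp
    have h1 : x - t • v ∈ U := by
      apply hball
      have : x - t • v - x = -(t • v) := by abel
      rw [mem_ball, dist_eq_norm, this, norm_neg, norm_smul, Real.norm_eq_abs,
        abs_of_pos ht, hdist]
      linarith
    have h2 : x + t • v ∈ U := by
      apply hball
      have : x + t • v - x = t • v := by abel
      rw [mem_ball, dist_eq_norm, this, norm_smul, Real.norm_eq_abs, abs_of_pos ht, hdist]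
      linarith
    refine ⟨⟨x - t • v, h1, ?_⟩, ⟨x + t • v, h2, ?_⟩⟩
    · rw [inner_sub_left, real_inner_smul_left, hxc]; nlinarith
    · rw [inner_add_left, real_inner_smul_left, hxc]; nlinarith
  by_cases hex1 : ∃ x ∈ U, ⟪x, v⟫ < c
  · by_cases hex2 : ∃ x ∈ U, c < ⟪x, v⟫
    · exfalso
      obtain ⟨x₁, hx₁U, hx₁⟩ := hex1
      obtain ⟨x₂, hx₂U, hx₂⟩ := hex2
      have hW1 : {x : En m | ⟪x, v⟫ < c} ⊆ U := half_subset hUo hUc hfr hx₁U hx₁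
      have hW2 : {x : En m | c < ⟪x, v⟫} ⊆ U := by
        have h4 := half_subset hUo hUc hfr' hx₂U
          (show ⟪x₂, -v⟫ < -c by rw [inner_neg_right]; linarith)
        intro x hx
        exact h4 (show ⟪x, -v⟫ < -c by rw [inner_neg_right]; simp only [mem_setOf_eq] at hx; linarith)
      apply hnu
      ext x
      simp only [mem_univ, iff_true]
      rcases lt_trichotomy (⟪x, v⟫) c with h | h | h
      · exact hW1 h
      · have hp1 : x + v ∈ U := hW2 (by simp only [mem_setOf_eq, inner_add_left, h]; linarith)
        have hp2 : x - v ∈ U := hW1 (by simp only [mem_setOf_eq, inner_sub_left, h]; linarith)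
        have hcomb := hUc hp2 hp1 (by norm_num : (0:ℝ) ≤ 1/2) (by norm_num : (0:ℝ) ≤ 1/2)
          (by norm_num : (1:ℝ)/2 + 1/2 = 1)
        have : (1/2 : ℝ) • (x - v) + (1/2 : ℝ) • (x + v) = x := by
          match_scalars <;> ring
        rwa [this] at hcomb
      · exact hW2 h
    · push_neg at hex2
      have hUP : ∀ x ∈ U, ⟪x, v⟫ ≠ c := by
        intro x hxU hxc
        obtain ⟨_, ⟨y, hyU, hy⟩⟩ := hmid x hxU hxc
        exact absurd hy (not_lt.2 (hex2 y hyU))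
      obtain ⟨x₁, hx₁U, hx₁⟩ := hex1
      have hW1 : {x : En m | ⟪x, v⟫ < c} ⊆ U := half_subset hUo hUc hfr hx₁U hx₁
      have hUW : U = {x : En m | ⟪x, v⟫ < c} :=
        subset_antisymm (fun x hx => lt_of_le_of_ne (hex2 x hx) (hUP x hx)) hW1
      exact line_of_halfspace hm hv0 hUW
  · push_neg at hex1
    by_cases hex2 : ∃ x ∈ U, c < ⟪x, v⟫
    · have hUP : ∀ x ∈ U, ⟪x, v⟫ ≠ c := by
        intro x hxU hxc
        obtain ⟨⟨y, hyU, hy⟩, _⟩ := hmid x hxU hxc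
        exact absurd hy (not_lt.2 (hex1 y hyU))
      obtain ⟨x₂, hx₂U, hx₂⟩ := hex2
      have hW2 : {x : En m | ⟪x, -v⟫ < -c} ⊆ U := half_subset hUo hUc hfr' hx₂U
        (show ⟪x₂, -v⟫ < -c by rw [inner_neg_right]; linarith)
      have hUW : U = {x : En m | ⟪x, -v⟫ < -c} := by
        refine subset_antisymm (fun x hx => ?_) hW2
        simp only [mem_setOf_eq, inner_neg_right, neg_lt_neg_iff]
        exact lt_of_le_of_ne (hex1 x hx) (Ne.symm (hUP x hx))
      exact line_of_halfspace hm (neg_ne_zero.2 hv0) hUW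
    · exfalso
      push_neg at hex2
      obtain ⟨x, hxU⟩ := hne
      have hxc : ⟪x, v⟫ = c := le_antisymm (hex2 x hxU) (hex1 x hxU)
      obtain ⟨_, ⟨y, hyU, hy⟩⟩ := hmid x hxU hxc
      exact absurd hy (not_lt.2 (hex2 y hyU))

lemma hyperplane_meets_interior {n : ℕ} (hn : 3 ≤ n) {K : Set (En n)}
    (hKconv : Convex ℝ K) (hKcl : IsClosed K) (hKlf : LineFree K)
    {δ : sphere (0 : En n) 1 → ℝ}
    (hsec : ∀ u : sphere (0 : En n) 1,
      IsConvexQuadricIn (sphHyp δ u) (frontier K ∩ sphHyp δ u)) :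
    ∀ u : sphere (0 : En n) 1, ∃ x, x ∈ interior K ∧ x ∈ sphHyp δ u := by
  intro u
  by_contra hcon
  push_neg at hcon
  obtain ⟨hsub, φ, hrange, Q, U, ⟨hQquad, hQne⟩, hUcomp, hUconv, hfront⟩ := hsec u
  obtain ⟨x₀, hx₀, hUeq⟩ := hUcomp
  obtain ⟨A, b, c₀, -, -, hQeq⟩ := hQquad
  have hQcl : IsClosed Q := by
    rw [hQeq]
    apply isClosed_eq _ continuous_const
    have h1 : Continuous fun x : En (n-1) => ∑ i, ∑ k, A i k * x i * x k :=
      continuous_finset_sum _ fun i _ => continuous_finset_sum _ fun k _ =>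
        by fun_prop
    have h2 : Continuous fun x : En (n-1) => 2 * ∑ i, b i * x i :=
      continuous_const.mul (continuous_finset_sum _ fun i _ =>
        by fun_prop)
    exact (h1.add h2).add continuous_const
  have hUopen : IsOpen U := by
    rw [hUeq]; exact hQcl.isOpen_compl.connectedComponentIn
  have hUne : U.Nonempty := ⟨x₀, hUeq ▸ mem_connectedComponentIn hx₀⟩
  have hUsub : U ⊆ Qᶜ := hUeq ▸ connectedComponentIn_subset Qᶜ x₀
  have hUnuniv : U ≠ univ := by
    intro h
    obtain ⟨q, hq⟩ := hQne
    exact (h ▸ hUsub) (mem_univ q) hq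
  have hSsub : frontier K ∩ sphHyp δ u = K ∩ sphHyp δ u := by
    ext x
    constructor
    · rintro ⟨hx1, hx2⟩
      refine ⟨?_, hx2⟩
      rw [← hKcl.closure_eq]
      exact frontier_subset_closure hx1
    · rintro ⟨hx1, hx2⟩
      refine ⟨?_, hx2⟩
      rw [hKcl.frontier_eq]
      exact ⟨hx1, fun hint => hcon x hint hx2⟩
  have hHconv : Convex ℝ (sphHyp δ u) := by
    intro x hx y hy a b ha hb hab
    simp only [sphHyp, mem_setOf_eq] at hx hy ⊢
    rw [inner_add_left, real_inner_smul_left, real_inner_smul_left, hx, hy, ← add_mul, hab,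
      one_mul]
  have hSconv : Convex ℝ ((φ : En (n - 1) → En n) ⁻¹' (frontier K ∩ sphHyp δ u)) := by
    rw [hSsub]
    have := (hKconv.inter hHconv).affine_preimage φ.toAffineMap
    rwa [φ.coe_toAffineMap] at this
  have hfc : Convex ℝ (frontier U) := hfront ▸ hSconv
  obtain ⟨z, w, hw0, hline⟩ := frontier_line (show 2 ≤ n - 1 by omega) hUopen hUconv hUne
    hUnuniv hfc
  apply hKlf
  refine ⟨φ z, φ.linearIsometry w, ?_, fun t => ?_⟩
  · intro h
    apply hw0
    have hnm := φ.linearIsometry.norm_map w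
    rw [h, norm_zero] at hnm
    exact norm_eq_zero.1 hnm.symm
  · have hmem : z + t • w ∈ (φ : En (n - 1) → En n) ⁻¹' (frontier K ∩ sphHyp δ u) := by
      rw [hfront]; exact hline t
    have hK : φ (z + t • w) ∈ K := by
      rw [← hKcl.closure_eq]
      exact frontier_subset_closure hmem.1
    have heq : φ (z + t • w) = φ z + t • φ.linearIsometry w := by
      have h1 : z + t • w = (t • w) +ᵥ z := by rw [vadd_eq_add, add_comm]
      rw [h1, φ.map_vadd, φ.linearIsometry.map_smul, vadd_eq_add, add_comm]
    rwa [heq] at hK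

/-- Lemma 5: under the hypotheses of Theorem 2 with K line-free, every
(n−2)-dimensional affine subspace L supporting K is contained in some hyperplane H(u). -/
theorem supporting_plane_lies_in_some_section_hyperplane
    {n : ℕ} (hn : 3 ≤ n) (K : Set (En n)) (hKconv : Convex ℝ K) (hKcl : IsClosed K)
    (hKint : (interior K).Nonempty) (hKne : K ≠ Set.univ) (hKlf : LineFree K)
    (δ : sphere (0 : En n) 1 → ℝ) (hδ : Continuous δ)
    (hsec : ∀ u : sphere (0 : En n) 1,
      IsConvexQuadricIn (sphHyp δ u) (frontier K ∩ sphHyp δ u)) :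
    ∀ L : AffineSubspace ℝ (En n), Module.finrank ℝ L.direction = n - 2 →
      ((L : Set (En n)) ∩ K).Nonempty → (L : Set (En n)) ∩ interior K = ∅ →
      ∃ u : sphere (0 : En n) 1, (L : Set (En n)) ⊆ sphHyp δ u := by
  intro L hdim hmeet hdisj
  obtain ⟨p, hpL, hpK⟩ := hmeet
  -- separation
  have hdisj' : Disjoint (interior K) (L : Set (En n)) := by
    rw [Set.disjoint_iff_inter_eq_empty, inter_comm]
    exact hdisj
  obtain ⟨f, c, hfs, hft⟩ := geometric_hahn_banach_open hKconv.interior isOpen_interior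
    L.convex hdisj'
  -- f vanishes on the direction of L
  have hfdir : ∀ d ∈ L.direction, f d = 0 := by
    intro d hd
    by_contra hfd
    have hmem : ∀ t : ℝ, p + t • d ∈ (L : Set (En n)) := by
      intro t
      have h5 : (t • d) +ᵥ p ∈ L :=
        AffineSubspace.vadd_mem_of_mem_direction (L.direction.smul_mem t hd) hpL
      rw [vadd_eq_add, add_comm] at h5
      exact h5
    have hge : ∀ t : ℝ, c ≤ f p + t * f d := by
      intro t
      have h6 := hft _ (hmem t)
      rw [map_add, map_smul, smul_eq_mul] at h6
      exact h6
    have h7 := hge ((c - f p - 1) / f d)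
    rw [div_mul_cancel₀ _ hfd] at h7
    linarith
  obtain ⟨xo, hxo⟩ := hKint
  have hlt : f xo < c := hfs xo hxo
  have hple : c ≤ f p := hft p hpL
  -- to vector form
  set v₀ : En n := (InnerProductSpace.toDual ℝ (En n)).symm f with hv₀def
  have hv₀ : ∀ x : En n, ⟪v₀, x⟫ = f x := fun x => InnerProductSpace.toDual_symm_apply
  have hv₀0 : v₀ ≠ 0 := by
    intro h
    have h1 := hv₀ xo
    have h2 := hv₀ p
    rw [h, inner_zero_left] at h1 h2
    linarith
  have hnv₀ : 0 < ‖v₀‖ := norm_pos_iff.2 hv₀0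
  set v : En n := ‖v₀‖⁻¹ • v₀ with hvdef
  have hv1 : ‖v‖ = 1 := by
    rw [hvdef, norm_smul, Real.norm_eq_abs, abs_of_pos (by positivity), inv_mul_cancel₀ hnv₀.ne']
  have hvD : v ∈ L.directionᗮ := by
    rw [Submodule.mem_orthogonal]
    intro d hd
    rw [real_inner_comm, hvdef, real_inner_smul_left, hv₀ d, hfdir d hd, mul_zero]
  have hinner : ∀ x : En n, ⟪x, v⟫ = ‖v₀‖⁻¹ * f x := by
    intro x
    rw [hvdef, real_inner_smul_right, real_inner_comm, hv₀]
  have hstrict : ∀ x ∈ interior K, ⟪x, v⟫ < ⟪p, v⟫ := by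
    intro x hx
    have h1 : f x < c := hfs x hx
    rw [hinner x, hinner p]
    have hpos : (0:ℝ) < ‖v₀‖⁻¹ := by positivity
    apply mul_lt_mul_of_pos_left _ hpos
    linarith
  -- the two sphere points
  have hvsph : v ∈ sphere (0 : En n) 1 := by rwa [mem_sphere_zero_iff_norm]
  have hnvsph : -v ∈ sphere (0 : En n) 1 := by rw [mem_sphere_zero_iff_norm, norm_neg]; exact hv1
  set uv : sphere (0 : En n) 1 := ⟨v, hvsph⟩ with huv
  set unv : sphere (0 : En n) 1 := ⟨-v, hnvsph⟩ with hunv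
  -- values of g at uv and unv
  have hA := hyperplane_meets_interior hn hKconv hKcl hKlf hsec
  set g : sphere (0 : En n) 1 → ℝ := fun u' => ⟪p, (u' : En n)⟫ - δ u' with hgdef
  have hg : Continuous g := (continuous_const.inner continuous_subtype_val).sub hδ
  have hgv : 0 < g uv := by
    obtain ⟨xA, hxA, hxAh⟩ := hA uv
    have h1 : ⟪xA, v⟫ = δ uv := hxAh
    have h2 := hstrict xA hxA
    show 0 < ⟪p, v⟫ - δ uv
    rw [← h1]
    linarith
  have hgnv : g unv < 0 := by
    obtain ⟨yA, hyA, hyAh⟩ := hA unv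
    have h1 : ⟪yA, -v⟫ = δ unv := hyAh
    have h2 := hstrict yA hyA
    show ⟪p, -v⟫ - δ unv < 0
    rw [← h1, inner_neg_right, inner_neg_right]
    linarith
  -- connectedness of the circle of directions orthogonal to L
  have hD2 : Module.finrank ℝ ↥(L.directionᗮ) = 2 := by
    have h1 := Submodule.finrank_add_finrank_orthogonal L.direction
    rw [hdim, finrank_euclideanSpace_fin] at h1
    omega
  have hrank : 1 < Module.rank ℝ ↥(L.directionᗮ) := by
    rw [← Module.finrank_eq_rank, hD2]
    exact_mod_cast one_lt_two
  have hconn : IsConnected (sphere (0 : ↥(L.directionᗮ)) 1) :=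
    isConnected_sphere hrank 0 zero_le_one
  haveI := Subtype.connectedSpace hconn
  set s : Set ↥(L.directionᗮ) := sphere 0 1 with hsdef
  have hnorm1 : ∀ x : ↥s, ‖((x : ↥(L.directionᗮ)) : En n)‖ = 1 := by
    intro x
    exact mem_sphere_zero_iff_norm.1 x.2
  set Φ : ↥s → sphere (0 : En n) 1 := fun x =>
    ⟨((x : ↥(L.directionᗮ)) : En n), by rw [mem_sphere_zero_iff_norm]; exact hnorm1 x⟩ with hΦdef
  have hΦc : Continuous Φ :=
    Continuous.subtype_mk (continuous_subtype_val.comp continuous_subtype_val) _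
  -- elements of s corresponding to v and -v
  have hvs : (⟨v, hvD⟩ : ↥(L.directionᗮ)) ∈ s :=
    mem_sphere_zero_iff_norm.2 hv1
  have hnvs : (⟨-v, Submodule.neg_mem _ hvD⟩ : ↥(L.directionᗮ)) ∈ s :=
    mem_sphere_zero_iff_norm.2 (by rw [show ‖(⟨-v, Submodule.neg_mem _ hvD⟩ : ↥(L.directionᗮ))‖ = ‖-v‖ from rfl, norm_neg]; exact hv1)
  set av : ↥s := ⟨⟨v, hvD⟩, hvs⟩
  set anv : ↥s := ⟨⟨-v, Submodule.neg_mem _ hvD⟩, hnvs⟩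
  have hΦv : Φ av = uv := by apply Subtype.ext; rfl
  have hΦnv : Φ anv = unv := by apply Subtype.ext; rfl
  -- intermediate value
  have hIV := intermediate_value_univ anv av (hg.comp hΦc)
  have h0mem : (0:ℝ) ∈ Icc ((g ∘ Φ) anv) ((g ∘ Φ) av) := by
    constructor
    · rw [Function.comp_apply, hΦnv]; exact hgnv.le
    · rw [Function.comp_apply, hΦv]; exact hgv.le
  obtain ⟨x, hx⟩ := hIV h0mem
  refine ⟨Φ x, ?_⟩
  intro y hyL
  have hyd : y - p ∈ L.direction := by
    have := AffineSubspace.vsub_mem_direction hyL hpL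
    simpa [vsub_eq_sub] using this
  have horth : ⟪y - p, (Φ x : En n)⟫ = 0 := by
    have hmem : ((Φ x : En n)) ∈ L.directionᗮ := ((x : ↥(L.directionᗮ))).2
    exact (Submodule.mem_orthogonal _ _).1 hmem _ hyd
  have hgx : ⟪p, (Φ x : En n)⟫ = δ (Φ x) := by
    have h9 : ⟪p, (Φ x : En n)⟫ - δ (Φ x) = 0 := hx
    linarith
  show ⟪y, (Φ x : En n)⟫ = δ (Φ x)
  rw [inner_sub_left] at horth
  linarith
end
end

section
/- Let n ≥ 3 and let E₁ and E₂ be (n−1)-dimensional ellipsoids in ℝⁿ lying, respectively, in hyperplanes H₁ and H₂ of ℝⁿ, such that E₁ ∩ E₂ is an (n−2)-dimensional ellipsoid. Then for every point v ∈ ℝⁿ \ (H₁ ∪ H₂) there exists a real quadric surface Q ⊆ ℝⁿ with {v} ∪ E₁ ∪ E₂ ⊆ Q. -/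
open Set Metric RealInnerProductSpace

noncomputable section

/-- A k-dimensional ellipsoid in ℝⁿ: the image of the unit sphere of ℝ^k under an
injective affine map ℝ^k → ℝⁿ. -/
def IsEllipsoidDim {n : ℕ} (k : ℕ) (S : Set (En n)) : Prop :=
  ∃ f : En k →ᵃ[ℝ] En n, Function.Injective f ∧ S = f '' sphere (0 : En k) 1

section Helpers

lemma inner_coord {n : ℕ} (x w : En n) : ⟪x, w⟫ = ∑ i, x i * w i := by
  simp [PiLp.inner_apply, RCLike.inner_apply, mul_comm]

lemma coord_eq_inner {n : ℕ} (y : En n) (j : Fin n) :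
    y j = ⟪y, EuclideanSpace.single j (1:ℝ)⟫ := by
  rw [inner_coord]; simp [EuclideanSpace.single_apply]

lemma norm_sq_coord {m : ℕ} (y : En m) : ‖y‖^2 = ∑ j, y j * y j := by
  rw [← real_inner_self_eq_norm_sq, inner_coord]

lemma aff_apply {k l : ℕ} (f : En k →ᵃ[ℝ] En l) (x : En k) : f x = f.linear x + f 0 := by
  conv_lhs => rw [show x = x +ᵥ (0:En k) by simp]
  rw [f.map_vadd]; rfl

lemma unit_exists (d : ℕ) (hd : 1 ≤ d) : ∃ z : En d, ‖z‖ = 1 := by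
  refine ⟨EuclideanSpace.single (⟨0, hd⟩ : Fin d) (1:ℝ), ?_⟩
  simp [EuclideanSpace.norm_single]

variable {E F : Type*} [NormedAddCommGroup E] [InnerProductSpace ℝ E]
  [NormedAddCommGroup F] [InnerProductSpace ℝ F]

lemma quad_sphere (T : E →ₗ[ℝ] F) (b : F) (r : ℝ)
    (h : ∀ z : E, ‖z‖ = 1 → ‖T z + b‖ ^ 2 = r) :
    ∀ z : E, ‖T z‖ ^ 2 = (r - ‖b‖ ^ 2) * ‖z‖ ^ 2 ∧ ⟪T z, b⟫ = 0 := by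
  have key : ∀ z : E, ‖z‖ = 1 → ‖T z‖ ^ 2 = r - ‖b‖ ^ 2 ∧ ⟪T z, b⟫ = 0 := by
    intro z hz
    have h1 := h z hz
    have h2 := h (-z) (by simpa using hz)
    rw [norm_add_sq_real] at h1 h2
    rw [map_neg, norm_neg, inner_neg_left] at h2
    constructor <;> linarith
  intro z
  by_cases hz0 : z = 0
  · simp [hz0]
  · have hn : ‖z‖ ≠ 0 := norm_ne_zero_iff.2 hz0
    have hu : ‖(‖z‖⁻¹ • z)‖ = 1 := by
      rw [norm_smul, norm_inv, norm_norm, inv_mul_cancel₀ hn]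
    obtain ⟨k1, k2⟩ := key _ hu
    rw [map_smul, norm_smul, norm_inv, norm_norm] at k1
    rw [map_smul, real_inner_smul_left] at k2
    constructor
    · field_simp at k1
      nlinarith [k1]
    · rcases mul_eq_zero.1 k2 with h' | h'
      · exact absurd h' (inv_ne_zero hn)
      · exact h'

lemma quad_sphere' (T : E →ₗ[ℝ] F) (b : F) (r : ℝ)
    (h : ∀ z : E, ‖z‖ = 1 → ‖T z + b‖ ^ 2 = r) :
    ∀ z : E, ‖T z + b‖ ^ 2 - r = (r - ‖b‖ ^ 2) * (‖z‖ ^ 2 - 1) := by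
  intro z
  obtain ⟨k1, k2⟩ := quad_sphere T b r h z
  rw [norm_add_sq_real, k1, k2]
  ring

lemma inner_vanish (w : E) (c : ℝ) (hz : ∃ z : E, ‖z‖ = 1)
    (h : ∀ z : E, ‖z‖ = 1 → ⟪z, w⟫ + c = 0) : w = 0 ∧ c = 0 := by
  have hw : w = 0 := by
    by_contra hw0
    have hn : ‖w‖ ≠ 0 := norm_ne_zero_iff.2 hw0
    have hu : ‖(‖w‖⁻¹ • w)‖ = 1 := by
      rw [norm_smul, norm_inv, norm_norm, inv_mul_cancel₀ hn]
    have h1 := h _ hu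
    have h2 := h (-(‖w‖⁻¹ • w)) (by simpa using hu)
    rw [inner_neg_left] at h2
    have : ⟪(‖w‖⁻¹ • w), w⟫ = 0 := by linarith
    rw [real_inner_smul_left, real_inner_self_eq_norm_sq] at this
    have : ‖w‖⁻¹ * ‖w‖^2 ≠ 0 := by positivity
    simp_all
  obtain ⟨z, hz1⟩ := hz
  have := h z hz1
  rw [hw, inner_zero_right] at this
  exact ⟨hw, by linarith⟩

def AffF {n : ℕ} (h : En n → ℝ) : Prop := ∃ (w : En n) (c : ℝ), ∀ x, h x = ⟪x, w⟫ + c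

def QuadF {n : ℕ} (q : En n → ℝ) : Prop :=
  ∃ (a : Matrix (Fin n) (Fin n) ℝ) (b : Fin n → ℝ) (c : ℝ), a.IsSymm ∧
    ∀ x : En n, q x = (∑ i, ∑ k, a i k * x i * x k) + 2 * (∑ i, b i * x i) + c

variable {n m : ℕ}

lemma affF_congr {h₁ h₂ : En n → ℝ} (H : AffF h₁) (e : ∀ x, h₁ x = h₂ x) : AffF h₂ := by
  obtain ⟨w, c, hw⟩ := H; exact ⟨w, c, fun x => by rw [← e x]; exact hw x⟩

lemma affF_inner (F : En n →ᵃ[ℝ] En m) (b : En m) : AffF (fun x => ⟪F x, b⟫) := by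
  refine ⟨F.linear.adjoint b, ⟪F 0, b⟫, fun x => ?_⟩
  dsimp only
  rw [LinearMap.adjoint_inner_right, aff_apply F x, inner_add_left]

lemma affF_const (c : ℝ) : AffF (fun _ : En n => c) := ⟨0, c, by simp⟩

lemma affF_add {h₁ h₂ : En n → ℝ} (H₁ : AffF h₁) (H₂ : AffF h₂) :
    AffF (fun x => h₁ x + h₂ x) := by
  obtain ⟨w₁, c₁, e₁⟩ := H₁; obtain ⟨w₂, c₂, e₂⟩ := H₂
  refine ⟨w₁ + w₂, c₁ + c₂, fun x => ?_⟩
  dsimp only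
  rw [e₁, e₂, inner_add_right]; ring

lemma affF_smul (r : ℝ) {h : En n → ℝ} (H : AffF h) : AffF (fun x => r * h x) := by
  obtain ⟨w, c, e⟩ := H
  refine ⟨r • w, r * c, fun x => ?_⟩
  dsimp only
  rw [e, real_inner_smul_right]; ring

lemma affF_sub {h₁ h₂ : En n → ℝ} (H₁ : AffF h₁) (H₂ : AffF h₂) :
    AffF (fun x => h₁ x - h₂ x) := by
  have := affF_add H₁ (affF_smul (-1) H₂)
  exact affF_congr this (fun x => by ring)

lemma affF_coord (F : En n →ᵃ[ℝ] En m) (j : Fin m) : AffF (fun x => F x j) :=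
  affF_congr (affF_inner F (EuclideanSpace.single j (1:ℝ)))
    (fun x => (coord_eq_inner (F x) j).symm)

lemma quadF_congr {q₁ q₂ : En n → ℝ} (H : QuadF q₁) (e : ∀ x, q₁ x = q₂ x) : QuadF q₂ := by
  obtain ⟨a, b, c, hs, hr⟩ := H; exact ⟨a, b, c, hs, fun x => by rw [← e x]; exact hr x⟩

lemma quadF_const (c : ℝ) : QuadF (fun _ : En n => c) :=
  ⟨0, 0, c, Matrix.isSymm_zero, by simp⟩

lemma quadF_add {q₁ q₂ : En n → ℝ} (h₁ : QuadF q₁) (h₂ : QuadF q₂) :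
    QuadF (fun x => q₁ x + q₂ x) := by
  obtain ⟨a₁, b₁, c₁, s₁, e₁⟩ := h₁; obtain ⟨a₂, b₂, c₂, s₂, e₂⟩ := h₂
  refine ⟨a₁ + a₂, b₁ + b₂, c₁ + c₂, s₁.add s₂, fun x => ?_⟩
  dsimp only
  rw [e₁, e₂]
  simp only [Matrix.add_apply, Pi.add_apply, add_mul, Finset.sum_add_distrib]
  ring

lemma quadF_affmul {h₁ h₂ : En n → ℝ} (H₁ : AffF h₁) (H₂ : AffF h₂) :
    QuadF (fun x => h₁ x * h₂ x) := by
  obtain ⟨w₁, c₁, e₁⟩ := H₁; obtain ⟨w₂, c₂, e₂⟩ := H₂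
  refine ⟨Matrix.of fun i k => (w₁ i * w₂ k + w₂ i * w₁ k) / 2,
      fun i => (c₁ * w₂ i + c₂ * w₁ i) / 2, c₁ * c₂, ?_, fun x => ?_⟩
  · ext i k
    simp only [Matrix.transpose_apply, Matrix.of_apply]
    ring
  · dsimp only
    rw [e₁, e₂, inner_coord, inner_coord]
    have key : (∑ i, ∑ k, (Matrix.of fun i k => (w₁ i * w₂ k + w₂ i * w₁ k) / 2) i k * x i * x k)
        = ((∑ i, x i * w₁ i) * (∑ k, x k * w₂ k)) / 2
          + ((∑ i, x i * w₂ i) * (∑ k, x k * w₁ k)) / 2 := by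
      rw [Finset.sum_mul_sum, Finset.sum_mul_sum, Finset.sum_div, Finset.sum_div,
        ← Finset.sum_add_distrib]
      refine Finset.sum_congr rfl fun i _ => ?_
      rw [Finset.sum_div, Finset.sum_div, ← Finset.sum_add_distrib]
      refine Finset.sum_congr rfl fun k _ => ?_
      simp only [Matrix.of_apply]
      ring
    rw [key]
    have key2 : (∑ i, (c₁ * w₂ i + c₂ * w₁ i) / 2 * x i)
        = (∑ i, c₁ * (x i * w₂ i)) / 2 + (∑ i, c₂ * (x i * w₁ i)) / 2 := by
      rw [Finset.sum_div, Finset.sum_div, ← Finset.sum_add_distrib]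
      refine Finset.sum_congr rfl fun i _ => ?_
      ring
    rw [key2, ← Finset.mul_sum, ← Finset.mul_sum]
    ring

lemma quadF_sum {ι : Type*} (s : Finset ι) (f : ι → En n → ℝ)
    (h : ∀ j ∈ s, QuadF (f j)) : QuadF (fun x => ∑ j ∈ s, f j x) := by
  classical
  induction s using Finset.cons_induction with
  | empty => simpa using quadF_const (n := n) 0
  | cons j s hj ih =>
      have := quadF_add (h j (by simp)) (ih fun k hk => h k (by simp [hk]))
      exact quadF_congr this (fun x => by rw [Finset.sum_cons])

lemma quadF_normsq (F : En n →ᵃ[ℝ] En m) (c : ℝ) : QuadF (fun x => ‖F x‖^2 + c) := by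
  have h : QuadF (fun x : En n => (∑ j, (F x) j * (F x) j) + c) :=
    quadF_add (quadF_sum Finset.univ (fun j x => (F x) j * (F x) j)
      (fun j _ => quadF_affmul (affF_coord F j) (affF_coord F j))) (quadF_const c)
  exact quadF_congr h (fun x => by rw [← norm_sq_coord])

lemma exists_affine_left_inverse {k n : ℕ} (f : En k →ᵃ[ℝ] En n)
    (hf : Function.Injective f) : ∃ g : En n →ᵃ[ℝ] En k, ∀ y, g (f y) = y := by
  have hlin : Function.Injective f.linear := by
    intro a b hab
    have : f a = f b := by rw [aff_apply f a, aff_apply f b, hab]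
    exact hf this
  obtain ⟨G, hG⟩ := f.linear.exists_leftInverse_of_injective (LinearMap.ker_eq_bot.2 hlin)
  refine ⟨⟨fun x => G (x - f 0), G, fun p v => ?_⟩, fun y => ?_⟩
  · simp only [vadd_eq_add]
    rw [show v + p - f 0 = v + (p - f 0) by abel, map_add]
  · have : f y - f 0 = f.linear y := by rw [aff_apply f y]; abel
    show G (f y - f 0) = y
    rw [this]
    exact congrFun (congrArg (fun h => h.toFun) hG) y

lemma linear_of_comp {a b c : ℕ} (F : En b →ᵃ[ℝ] En c) (e : En a →ᵃ[ℝ] En b)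
    (f : En a →ᵃ[ℝ] En c) (h : ∀ z, F (e z) = f z) :
    ∀ z, F.linear (e.linear z) = f.linear z := by
  intro z
  have hz := h z
  have h0 := h 0
  rw [aff_apply e z, aff_apply F, map_add, aff_apply f z] at hz
  rw [aff_apply F] at h0
  have key : F.linear (e.linear z) + (F.linear (e 0) + F 0) = f.linear z + f 0 := by
    rw [← hz]; abel
  rw [h0] at key
  exact add_right_cancel key

lemma a_ne_zero {n : ℕ} {q : En n → ℝ} {a : Matrix (Fin n) (Fin n) ℝ} {b : Fin n → ℝ} {c : ℝ}
    (hrep : ∀ x : En n, q x = (∑ i, ∑ k, a i k * x i * x k) + 2 * (∑ i, b i * x i) + c)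
    (xh : En n) (α β γ : ℝ) (hα : α ≠ 0)
    (hline : ∀ s : ℝ, q (s • xh) = α * s^2 + β * s + γ) : a ≠ 0 := by
  have hsc : ∀ (s : ℝ) (i : Fin n), (s • xh : En n) i = s * xh i := fun s i => rfl
  have hrepline : ∀ s : ℝ, q (s • xh)
      = (∑ i, ∑ k, a i k * xh i * xh k) * s^2 + (2 * ∑ i, b i * xh i) * s + c := by
    intro s
    rw [hrep]
    have e1 : (∑ i, ∑ k, a i k * (s • xh : En n) i * (s • xh : En n) k)
        = (∑ i, ∑ k, a i k * xh i * xh k) * s^2 := by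
      rw [Finset.sum_mul]
      refine Finset.sum_congr rfl fun i _ => ?_
      rw [Finset.sum_mul]
      refine Finset.sum_congr rfl fun k _ => ?_
      rw [hsc, hsc]; ring
    have e2 : (∑ i, b i * (s • xh : En n) i) = (∑ i, b i * xh i) * s := by
      rw [Finset.sum_mul]
      refine Finset.sum_congr rfl fun i _ => ?_
      rw [hsc]; ring
    rw [e1, e2]; ring
  have h0 := (hrepline 0).symm.trans (hline 0)
  have h1 := (hrepline 1).symm.trans (hline 1)
  have h2 := (hrepline 2).symm.trans (hline 2)
  have hAα : (∑ i, ∑ k, a i k * xh i * xh k) = α := by nlinarith [h0, h1, h2]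
  intro hz
  apply hα
  rw [← hAα]
  simp [hz]

lemma build_quadric {n : ℕ} (q : En n → ℝ) (hq : QuadF q)
    (xh : En n) (α β γ : ℝ) (hα : α ≠ 0)
    (hline : ∀ s : ℝ, q (s • xh) = α * s^2 + β * s + γ)
    (v : En n) (hv : q v = 0) (S : Set (En n)) (hS : ∀ x ∈ S, q x = 0) :
    ∃ Q : Set (En n), IsRealQuadricSurface Q ∧ insert v S ⊆ Q := by
  obtain ⟨a, b, c, hsymm, hrep⟩ := hq
  refine ⟨{x | q x = 0}, ⟨⟨a, b, c, hsymm, a_ne_zero hrep xh α β γ hα hline, ?_⟩, ⟨v, hv⟩⟩, ?_⟩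
  · ext x; simp only [Set.mem_setOf_eq, hrep x]
  · intro x hx
    rcases hx with rfl | hx
    · exact hv
    · exact hS x hx

end Helpers

set_option maxHeartbeats 2000000 in
/-- Lemma 10: if E₁, E₂ are (n−1)-dimensional ellipsoids lying in
hyperplanes H₁, H₂ of ℝⁿ (n ≥ 3) whose intersection E₁ ∩ E₂ is an (n−2)-dimensional
ellipsoid, then for every point v outside H₁ ∪ H₂ there is a real quadric surface
containing {v} ∪ E₁ ∪ E₂. -/
theorem quadric_through_point_and_two_ellipsoids
    {n : ℕ} (hn : 3 ≤ n) (H₁ H₂ E₁ E₂ : Set (En n))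
    (hH₁ : ∃ (v : En n) (c : ℝ), v ≠ 0 ∧ H₁ = {x : En n | ⟪x, v⟫ = c})
    (hH₂ : ∃ (v : En n) (c : ℝ), v ≠ 0 ∧ H₂ = {x : En n | ⟪x, v⟫ = c})
    (hE₁ : IsEllipsoidDim (n - 1) E₁) (hE₂ : IsEllipsoidDim (n - 1) E₂)
    (hE₁H : E₁ ⊆ H₁) (hE₂H : E₂ ⊆ H₂)
    (hEE : IsEllipsoidDim (n - 2) (E₁ ∩ E₂)) :
    ∀ v : En n, v ∉ H₁ ∪ H₂ →
      ∃ Q : Set (En n), IsRealQuadricSurface Q ∧ insert v (E₁ ∪ E₂) ⊆ Q := by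
  obtain ⟨v₁, c₁, hv₁, rfl⟩ := hH₁
  obtain ⟨v₂, c₂, hv₂, rfl⟩ := hH₂
  obtain ⟨f₁, hf₁, hE₁s⟩ := hE₁
  obtain ⟨f₂, hf₂, hE₂s⟩ := hE₂
  obtain ⟨f₃, hf₃, hE₃s⟩ := hEE
  intro v hv
  simp only [Set.mem_union, Set.mem_setOf_eq, not_or] at hv
  obtain ⟨hvH₁, hvH₂⟩ := hv
  have hd1 : ⟪v, v₁⟫ - c₁ ≠ 0 := sub_ne_zero.2 hvH₁
  have hd2 : ⟪v, v₂⟫ - c₂ ≠ 0 := sub_ne_zero.2 hvH₂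
  have hE₁mem : ∀ x ∈ E₁, ⟪x, v₁⟫ = c₁ := fun x hx => hE₁H hx
  have hE₂mem : ∀ x ∈ E₂, ⟪x, v₂⟫ = c₂ := fun x hx => hE₂H hx
  obtain ⟨g₁, hg₁⟩ := exists_affine_left_inverse f₁ hf₁
  obtain ⟨g₂, hg₂⟩ := exists_affine_left_inverse f₂ hf₂
  by_cases hsub : ∀ x ∈ E₂, ⟪x, v₁⟫ = c₁
  · -- Case 1 : E₂ ⊆ H₁; take the quadric (⟪x,v₁⟫ - c₁)(⟪x,v₁⟫ - ⟪v,v₁⟫) = 0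
    have hNpos : (0:ℝ) < ⟪v₁, v₁⟫ := by
      rw [real_inner_self_eq_norm_sq]
      have : ‖v₁‖ ≠ 0 := norm_ne_zero_iff.2 hv₁
      positivity
    refine build_quadric (fun x => (⟪x, v₁⟫ - c₁) * (⟪x, v₁⟫ - ⟪v, v₁⟫))
      (quadF_affmul ⟨v₁, -c₁, fun x => by ring⟩ ⟨v₁, -⟪v, v₁⟫, fun x => by ring⟩)
      v₁ (⟪v₁, v₁⟫ * ⟪v₁, v₁⟫) (-(c₁ + ⟪v, v₁⟫) * ⟪v₁, v₁⟫) (c₁ * ⟪v, v₁⟫)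
      (by nlinarith) ?_ v (by ring) (E₁ ∪ E₂) ?_
    · intro s
      rw [real_inner_smul_left]
      ring
    · intro x hx
      have hx1 : ⟪x, v₁⟫ = c₁ := by
        rcases hx with hx | hx
        · exact hE₁mem x hx
        · exact hsub x hx
      rw [hx1]
      ring
  · -- Case 2
    have hn2 : 1 ≤ n - 2 := by omega
    have hf₃mem : ∀ z : En (n-2), ‖z‖ = 1 → f₃ z ∈ E₁ ∩ E₂ := by
      intro z hz
      rw [hE₃s]
      exact ⟨z, mem_sphere_zero_iff_norm.2 hz, rfl⟩
    -- every point of the domain of f₃ is mapped into the range of f₂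
    have hrange : ∀ z : En (n-2), ∃ y : En (n-1), f₂ y = f₃ z := by
      intro z
      have hcomb : ∃ w₁ w₂ : En (n-2), ∃ t : ℝ, ‖w₁‖ = 1 ∧ ‖w₂‖ = 1 ∧
          z = AffineMap.lineMap w₁ w₂ t := by
        by_cases hz : z = 0
        · obtain ⟨z₀, hz₀⟩ := unit_exists (n-2) hn2
          refine ⟨z₀, -z₀, 1/2, hz₀, by simpa using hz₀, ?_⟩
          rw [AffineMap.lineMap_apply_module, hz]
          module
        · have hnz : ‖z‖ ≠ 0 := norm_ne_zero_iff.2 hz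
          refine ⟨‖z‖⁻¹ • z, -(‖z‖⁻¹ • z), (1 - ‖z‖)/2, ?_, ?_, ?_⟩
          · rw [norm_smul, norm_inv, norm_norm, inv_mul_cancel₀ hnz]
          · rw [norm_neg, norm_smul, norm_inv, norm_norm, inv_mul_cancel₀ hnz]
          · rw [AffineMap.lineMap_apply_module]
            have e1 : (1 - (1 - ‖z‖)/2) • (‖z‖⁻¹ • z) + ((1 - ‖z‖)/2) • -(‖z‖⁻¹ • z)
                = ((1 - (1 - ‖z‖)/2) * ‖z‖⁻¹ - ((1 - ‖z‖)/2) * ‖z‖⁻¹) • z := by module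
            rw [e1, show (1 - (1 - ‖z‖)/2) * ‖z‖⁻¹ - ((1 - ‖z‖)/2) * ‖z‖⁻¹ = 1 by
              field_simp; ring, one_smul]
      obtain ⟨w₁, w₂, t, hw₁, hw₂, hzeq⟩ := hcomb
      have hm₁ : f₃ w₁ ∈ E₂ := (hf₃mem w₁ hw₁).2
      have hm₂ : f₃ w₂ ∈ E₂ := (hf₃mem w₂ hw₂).2
      rw [hE₂s] at hm₁ hm₂
      obtain ⟨y₁, -, hy₁⟩ := hm₁
      obtain ⟨y₂, -, hy₂⟩ := hm₂
      refine ⟨AffineMap.lineMap y₁ y₂ t, ?_⟩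
      rw [AffineMap.apply_lineMap, hy₁, hy₂, hzeq, ← AffineMap.apply_lineMap]
    set e : En (n-2) →ᵃ[ℝ] En (n-1) := g₂.comp f₃ with hedef
    have he : ∀ z, f₂ (e z) = f₃ z := by
      intro z
      obtain ⟨y, hy⟩ := hrange z
      have h1 : e z = y := by
        rw [hedef, AffineMap.comp_apply, ← hy, hg₂ y]
      rw [h1, hy]
    have hesph : ∀ z : En (n-2), ‖z‖ = 1 → ‖e z‖ = 1 := by
      intro z hz
      have hm : f₃ z ∈ E₂ := (hf₃mem z hz).2
      rw [hE₂s] at hm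
      obtain ⟨y, hy, hyz⟩ := hm
      have h1 : e z = y := by rw [hedef, AffineMap.comp_apply, ← hyz, hg₂ y]
      rw [h1]
      exact mem_sphere_zero_iff_norm.1 hy
    have helin := linear_of_comp f₂ e f₃ he
    have hf₃lin : Function.Injective f₃.linear := by
      intro a b hab
      apply hf₃
      rw [aff_apply f₃ a, aff_apply f₃ b, hab]
    have helininj : Function.Injective e.linear := fun a b hab =>
      hf₃lin (by rw [← helin, ← helin, hab])
    -- sphere quadric identity for e
    have hesph' : ∀ z : En (n-2), ‖z‖ = 1 → ‖e.linear z + e 0‖ ^ 2 = 1 := by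
      intro z hz
      rw [← aff_apply, hesph z hz, one_pow]
    have hrho1 := quad_sphere' e.linear (e 0) 1 hesph'
    have hrho2 := quad_sphere e.linear (e 0) 1 hesph'
    have hrho'ne : (1 - ‖e 0‖^2) ≠ 0 := by
      obtain ⟨z₀, hz₀⟩ := unit_exists (n-2) hn2
      have h1 := (hrho2 z₀).1
      intro hzero
      rw [hzero, hz₀, one_pow, zero_mul, pow_eq_zero_iff (by norm_num), norm_eq_zero] at h1
      have : z₀ ≠ 0 := by
        intro h0; rw [h0, norm_zero] at hz₀; norm_num at hz₀
      exact this (helininj (by rw [h1, map_zero]))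
    -- sphere quadric identity for g₁ ∘ f₃
    set F₃ : En (n-2) →ᵃ[ℝ] En (n-1) := g₁.comp f₃ with hF₃def
    have hF₃sph : ∀ z : En (n-2), ‖z‖ = 1 → ‖F₃.linear z + F₃ 0‖ ^ 2 = 1 := by
      intro z hz
      rw [← aff_apply]
      have hm : f₃ z ∈ E₁ := (hf₃mem z hz).1
      rw [hE₁s] at hm
      obtain ⟨y, hy, hyz⟩ := hm
      have h1 : F₃ z = y := by rw [hF₃def, AffineMap.comp_apply, ← hyz, hg₁ y]
      rw [h1, mem_sphere_zero_iff_norm.1 hy, one_pow]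
    have hrho3 := quad_sphere' F₃.linear (F₃ 0) 1 hF₃sph
    -- the linear form φ(y) = ⟪y,u⟫ - d₀ cutting out the intersection plane
    set u : En (n-1) := f₂.linear.adjoint v₁ with hudef
    set d₀ : ℝ := c₁ - ⟪f₂ 0, v₁⟫ with hd₀def
    have hphi : ∀ y : En (n-1), ⟪f₂ y, v₁⟫ - c₁ = ⟪y, u⟫ - d₀ := by
      intro y
      rw [hudef, LinearMap.adjoint_inner_right, aff_apply f₂ y, inner_add_left, hd₀def]
      ring
    have hu0 : u ≠ 0 := by
      intro hu
      apply hsub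
      obtain ⟨z₀, hz₀⟩ := unit_exists (n-2) hn2
      have hm := hf₃mem z₀ hz₀
      have hm2 : f₃ z₀ ∈ E₂ := hm.2
      rw [hE₂s] at hm2
      obtain ⟨y₀, -, hy₀⟩ := hm2
      have h1 : ⟪f₂ y₀, v₁⟫ = c₁ := by rw [hy₀]; exact hE₁mem _ hm.1
      have h2 := hphi y₀
      rw [h1, hu, inner_zero_right] at h2
      intro x hx
      rw [hE₂s] at hx
      obtain ⟨y, -, rfl⟩ := hx
      have h3 := hphi y
      rw [hu, inner_zero_right] at h3
      linarith
    -- φ vanishes on the range of e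
    have hphie_sph : ∀ z : En (n-2), ‖z‖ = 1 →
        ⟪z, e.linear.adjoint u⟫ + (⟪e 0, u⟫ - d₀) = 0 := by
      intro z hz
      have h1 : ⟪f₃ z, v₁⟫ = c₁ := hE₁mem _ (hf₃mem z hz).1
      have h2 := hphi (e z)
      rw [he z, h1, sub_self] at h2
      rw [LinearMap.adjoint_inner_right]
      have h3 : ⟪e z, u⟫ = ⟪e.linear z, u⟫ + ⟪e 0, u⟫ := by
        rw [aff_apply e z, inner_add_left]
      linarith
    obtain ⟨hadj0, hconst0⟩ :=
      inner_vanish (e.linear.adjoint u) (⟪e 0, u⟫ - d₀) (unit_exists (n-2) hn2) hphie_sph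
    have horth : ∀ z : En (n-2), ⟪e.linear z, u⟫ = 0 := by
      intro z
      rw [← LinearMap.adjoint_inner_right, hadj0, inner_zero_right]
    -- the plane φ = 0 is exactly the image of e
    have hplane : ∀ y : En (n-1), ⟪y, u⟫ - d₀ = 0 → ∃ z, e z = y := by
      intro y hy
      have hWle : LinearMap.range e.linear ≤ (Submodule.span ℝ {u})ᗮ := by
        rintro x ⟨z, rfl⟩
        rw [Submodule.mem_orthogonal]
        intro a ha
        obtain ⟨r, rfl⟩ := Submodule.mem_span_singleton.1 ha
        rw [real_inner_smul_left, real_inner_comm, horth z, mul_zero]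
      have hfr1 : Module.finrank ℝ (LinearMap.range e.linear) = n - 2 := by
        rw [LinearMap.finrank_range_of_inj helininj, finrank_euclideanSpace_fin]
      have hfr2 : Module.finrank ℝ ((Submodule.span ℝ {u})ᗮ) = n - 2 := by
        have h1 : Module.finrank ℝ (Submodule.span ℝ {u}) = 1 := finrank_span_singleton hu0
        have h2 := Submodule.finrank_add_finrank_orthogonal (K := Submodule.span ℝ {u})
        rw [h1, finrank_euclideanSpace_fin] at h2
        omega
      have heq : LinearMap.range e.linear = (Submodule.span ℝ {u})ᗮ :=
        Submodule.eq_of_le_of_finrank_le hWle (by rw [hfr1, hfr2])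
      have hmem : y - e 0 ∈ (Submodule.span ℝ {u})ᗮ := by
        rw [Submodule.mem_orthogonal]
        intro a ha
        obtain ⟨r, rfl⟩ := Submodule.mem_span_singleton.1 ha
        rw [real_inner_smul_left]
        have h1 : ⟪u, y - e 0⟫ = 0 := by
          rw [real_inner_comm, inner_sub_left]
          linarith [hconst0, hy]
        rw [h1, mul_zero]
      rw [← heq] at hmem
      obtain ⟨z, hz⟩ := hmem
      exact ⟨z, by rw [aff_apply e z, hz]; abel⟩
    -- the quadric G₀ vanishes on the plane φ = 0
    set G : En (n-1) →ᵃ[ℝ] En (n-1) := g₁.comp f₂ with hGdef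
    have hGe : ∀ z, G (e z) = F₃ z := by
      intro z
      rw [hGdef, AffineMap.comp_apply, he z, hF₃def, AffineMap.comp_apply]
    have hG0plane : ∀ y : En (n-1), ⟪y, u⟫ - d₀ = 0 →
        (‖G y‖^2 - 1) - ((1 - ‖F₃ 0‖^2)/(1 - ‖e 0‖^2)) * (‖y‖^2 - 1) = 0 := by
      intro y hy
      obtain ⟨z, rfl⟩ := hplane y hy
      have h1 : ‖G (e z)‖^2 - 1 = (1 - ‖F₃ 0‖^2) * (‖z‖^2 - 1) := by
        rw [hGe z, aff_apply F₃ z]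
        exact hrho3 z
      have h2 : ‖e z‖^2 - 1 = (1 - ‖e 0‖^2) * (‖z‖^2 - 1) := by
        rw [aff_apply e z]
        exact hrho1 z
      rw [h1, h2]
      field_simp
      ring
    -- the division identity
    set s₀ : ℝ := (1 - ‖F₃ 0‖^2)/(1 - ‖e 0‖^2) with hs₀def
    set u' : En (n-1) := (‖u‖^2)⁻¹ • u with hu'def
    have hu'u : ⟪u', u⟫ = 1 := by
      rw [hu'def, real_inner_smul_left, real_inner_self_eq_norm_sq]
      field_simp [norm_ne_zero_iff.2 hu0]
    set kk : ℝ := ‖G.linear u'‖^2 - s₀ * ‖u'‖^2 with hkkdef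
    set ψ : En (n-1) → ℝ :=
      fun y => 2*⟪G y, G.linear u'⟫ - 2*s₀*⟪y, u'⟫ - (⟪y, u⟫ - d₀) * kk with hψdef
    have hdiv : ∀ y : En (n-1),
        (‖G y‖^2 - 1) - s₀ * (‖y‖^2 - 1) = (⟪y, u⟫ - d₀) * ψ y := by
      intro y
      have hy' : ⟪y - (⟪y, u⟫ - d₀) • u', u⟫ - d₀ = 0 := by
        rw [inner_sub_left, real_inner_smul_left, hu'u]
        ring
      have h0 := hG0plane (y - (⟪y, u⟫ - d₀) • u') hy'
      have hGy' : G (y - (⟪y, u⟫ - d₀) • u') = G y - (⟪y, u⟫ - d₀) • G.linear u' := by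
        rw [aff_apply G (y - (⟪y, u⟫ - d₀) • u'), aff_apply G y, map_sub, map_smul]
        abel
      rw [hGy', norm_sub_sq_real, norm_sub_sq_real, real_inner_smul_right,
        real_inner_smul_right, norm_smul, norm_smul, mul_pow, mul_pow,
        Real.norm_eq_abs, sq_abs] at h0
      rw [hψdef]
      dsimp only
      rw [hkkdef]
      linear_combination h0
    -- assembling the quadric polynomial on ℝⁿ
    set Mv : En n → ℝ := fun x => -ψ (g₂ x) with hMdef
    have hMaff : AffF Mv := by
      have h1 : AffF (fun x : En n => ⟪(G.comp g₂) x, G.linear u'⟫) := affF_inner _ _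
      have h2 : AffF (fun x : En n => ⟪g₂ x, u'⟫) := affF_inner g₂ u'
      have h3 : AffF (fun x : En n => ⟪g₂ x, u⟫) := affF_inner g₂ u
      have h4 : AffF (fun x : En n => ψ (g₂ x)) := by
        refine affF_congr (affF_sub (affF_sub (affF_smul 2 h1) (affF_smul (2*s₀) h2))
          (affF_smul kk (affF_sub h3 (affF_const d₀)))) (fun x => ?_)
        rw [hψdef]
        dsimp only [AffineMap.comp_apply]
        ring
      refine affF_congr (affF_smul (-1) h4) (fun x => by ring)
    obtain ⟨wq, cq, hwq⟩ :
        AffF (fun x : En n => Mv x +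
          (-((‖g₁ v‖^2 - 1) + (⟪v, v₁⟫ - c₁) * Mv v) / ((⟪v, v₁⟫ - c₁) * (⟪v, v₂⟫ - c₂)))
            * (⟪x, v₂⟫ - c₂)) :=
      affF_add hMaff (affF_smul _ (⟨v₂, -c₂, fun x => by ring⟩ :
        AffF (fun x : En n => ⟪x, v₂⟫ - c₂)))
    set t₀ : ℝ :=
      -((‖g₁ v‖^2 - 1) + (⟪v, v₁⟫ - c₁) * Mv v) / ((⟪v, v₁⟫ - c₁) * (⟪v, v₂⟫ - c₂)) with ht₀def
    set qf : En n → ℝ :=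
      fun x => (‖g₁ x‖^2 - 1) + (⟪x, v₁⟫ - c₁) * (Mv x + t₀ * (⟪x, v₂⟫ - c₂)) with hqfdef
    have hqQuad : QuadF qf := by
      have haff1 : AffF (fun x : En n => ⟪x, v₁⟫ - c₁) := ⟨v₁, -c₁, fun x => by ring⟩
      have haff2 : AffF (fun x : En n => Mv x + t₀ * (⟪x, v₂⟫ - c₂)) := ⟨wq, cq, hwq⟩
      refine quadF_congr (quadF_add (quadF_normsq g₁ (-1))
        (quadF_affmul haff1 haff2)) (fun x => ?_)
      rw [hqfdef]
      dsimp only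
      rw [show Mv x + t₀ * (⟪x, v₂⟫ - c₂) = ⟪x, wq⟫ + cq from hwq x]
      ring
    -- the chosen direction witnessing a nonzero quadratic part
    have hg₁linsurj : Function.Surjective g₁.linear := by
      intro y
      refine ⟨f₁.linear y, ?_⟩
      have := linear_of_comp g₁ f₁ (AffineMap.id ℝ (En (n-1))) (fun z => by
        rw [AffineMap.id_apply]; exact hg₁ z) y
      simpa using this
    have hker : Module.finrank ℝ (LinearMap.ker g₁.linear) = 1 := by
      have h := LinearMap.finrank_range_add_finrank_ker g₁.linear
      rw [LinearMap.range_eq_top.2 hg₁linsurj, finrank_top, finrank_euclideanSpace_fin,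
        finrank_euclideanSpace_fin] at h
      omega
    have hVK : ¬ ((Submodule.span ℝ {v₁})ᗮ ≤ LinearMap.ker g₁.linear) := by
      intro hle
      have h1 := Submodule.finrank_mono hle
      have h2 : Module.finrank ℝ ((Submodule.span ℝ {v₁})ᗮ) = n - 1 := by
        have h3 : Module.finrank ℝ (Submodule.span ℝ {v₁}) = 1 := finrank_span_singleton hv₁
        have h4 := Submodule.finrank_add_finrank_orthogonal (K := Submodule.span ℝ {v₁})
        rw [h3, finrank_euclideanSpace_fin] at h4
        omega
      rw [h2, hker] at h1
      omega
    obtain ⟨xh, hxhV, hxhK⟩ := SetLike.not_le_iff_exists.1 hVK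
    have hxhv₁ : ⟪xh, v₁⟫ = 0 := by
      have := (Submodule.mem_orthogonal _ _).1 hxhV v₁ (Submodule.mem_span_singleton_self v₁)
      rw [real_inner_comm] at this
      exact this
    have hxhL : g₁.linear xh ≠ 0 := fun h => hxhK (LinearMap.mem_ker.2 h)
    have hαne : ‖g₁.linear xh‖^2 ≠ 0 := by
      have : ‖g₁.linear xh‖ ≠ 0 := norm_ne_zero_iff.2 hxhL
      positivity
    have hline : ∀ s : ℝ, qf (s • xh) = (‖g₁.linear xh‖^2) * s^2
        + (2*⟪g₁.linear xh, g₁ 0⟫ - c₁*⟪xh, wq⟫) * s + (‖g₁ 0‖^2 - 1 - c₁*cq) := by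
      intro s
      rw [hqfdef]
      dsimp only
      rw [show Mv (s • xh) + t₀ * (⟪s • xh, v₂⟫ - c₂) = ⟪s • xh, wq⟫ + cq from hwq (s • xh)]
      rw [aff_apply g₁ (s • xh), map_smul, norm_add_sq_real, norm_smul,
        real_inner_smul_left, real_inner_smul_left, real_inner_smul_left, hxhv₁,
        Real.norm_eq_abs, mul_pow, sq_abs]
      ring
    have hqv : qf v = 0 := by
      have hD : ((⟪v, v₁⟫ - c₁) * (⟪v, v₂⟫ - c₂)) ≠ 0 := mul_ne_zero hd1 hd2
      have key : t₀ * ((⟪v, v₁⟫ - c₁) * (⟪v, v₂⟫ - c₂))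
          = -((‖g₁ v‖^2 - 1) + (⟪v, v₁⟫ - c₁) * Mv v) := by
        rw [ht₀def]
        exact div_mul_cancel₀ _ hD
      rw [hqfdef]
      dsimp only
      linear_combination key
    have hvanish : ∀ x ∈ E₁ ∪ E₂, qf x = 0 := by
      intro x hx
      rcases hx with hx | hx
      · have h1 : ⟪x, v₁⟫ = c₁ := hE₁mem x hx
        rw [hE₁s] at hx
        obtain ⟨y, hy, rfl⟩ := hx
        rw [hqfdef]
        dsimp only
        rw [h1, hg₁ y, mem_sphere_zero_iff_norm.1 hy]
        ring
      · have h2 : ⟪x, v₂⟫ = c₂ := hE₂mem x hx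
        rw [hE₂s] at hx
        obtain ⟨y, hy, rfl⟩ := hx
        have hy1 : ‖y‖ = 1 := mem_sphere_zero_iff_norm.1 hy
        rw [hqfdef]
        dsimp only
        have h3 : Mv (f₂ y) = -ψ y := by
          rw [hMdef]
          dsimp only
          rw [hg₂ y]
        have h4 : ‖g₁ (f₂ y)‖^2 - 1 = (⟪y, u⟫ - d₀) * ψ y := by
          have h5 := hdiv y
          rw [hy1] at h5
          rw [hGdef, AffineMap.comp_apply] at h5
          linear_combination h5
        rw [h2, h3, hphi y]
        rw [show (‖g₁ (f₂ y)‖^2 - 1) = (⟪y, u⟫ - d₀) * ψ y from h4]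
        ring
    exact build_quadric qf hqQuad xh _ _ _ hαne hline v hqv (E₁ ∪ E₂) hvanish
end
end
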